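/- arXiv:1703.06316 — 6 statements merged into one kernel-verified Lean document; each statement's English description precedes it below -/
import Mathlib

section
/- Let 1 ≤ p < 2 and n = dk for natural numbers d, k ≥ 1. Then there exist norm-one linear functionals ψ₁,…,ψₙ on ℓ_p^d (namely k copies of each coordinate functional) whose product has supremum norm exactly d^{-n/p}; consequently the n-th linear polarization constant satisfies c_n(ℓ_p^d) ≥ d^{n/p}. -/
open scoped ENNReal

noncomputable def prodSupNorm {𝕜 X : Type*} [RCLike 𝕜] [NormedAddCommGroup X]
    [NormedSpace 𝕜 X] {n : ℕ} (ψ : Fin n → (X →L[𝕜] 𝕜)) : ℝ :=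
  sSup {r : ℝ | ∃ x : X, ‖x‖ ≤ 1 ∧ r = ‖∏ j, ψ j x‖}


/-- The n-th linear polarization constant of a normed space `X`: the least constant `c ≥ 0`
such that `‖ψ₁‖⋯‖ψₙ‖ ≤ c·‖ψ₁⋯ψₙ‖` for all continuous linear functionals `ψ₁,…,ψₙ`. -/
noncomputable def polarizationConstant (𝕜 : Type*) (X : Type*) [RCLike 𝕜]
    [NormedAddCommGroup X] [NormedSpace 𝕜 X] (n : ℕ) : ℝ :=
  sInf {c : ℝ | 0 ≤ c ∧ ∀ ψ : Fin n → (X →L[𝕜] 𝕜), (∏ j, ‖ψ j‖) ≤ c * prodSupNorm ψ}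

section Aux
variable {𝕜 X : Type*} [RCLike 𝕜] [NormedAddCommGroup X] [NormedSpace 𝕜 X] {n : ℕ}

lemma prodSupNorm_bddAbove (ψ : Fin n → (X →L[𝕜] 𝕜)) :
    BddAbove {r : ℝ | ∃ x : X, ‖x‖ ≤ 1 ∧ r = ‖∏ j, ψ j x‖} := by
  refine ⟨∏ j, ‖ψ j‖, ?_⟩
  rintro r ⟨x, hx, rfl⟩
  rw [norm_prod]
  exact Finset.prod_le_prod (fun j _ => norm_nonneg _)
    (fun j _ => (ψ j).le_opNorm x |>.trans (by
      nlinarith [norm_nonneg (ψ j), (ψ j).opNorm_nonneg, norm_nonneg x]))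

lemma prodSupNorm_set_nonempty (ψ : Fin n → (X →L[𝕜] 𝕜)) :
    Set.Nonempty {r : ℝ | ∃ x : X, ‖x‖ ≤ 1 ∧ r = ‖∏ j, ψ j x‖} :=
  ⟨‖∏ j, ψ j 0‖, 0, by simp, rfl⟩

lemma le_prodSupNorm (ψ : Fin n → (X →L[𝕜] 𝕜)) {x : X} (hx : ‖x‖ ≤ 1) :
    ‖∏ j, ψ j x‖ ≤ prodSupNorm ψ :=
  le_csSup (prodSupNorm_bddAbove ψ) ⟨x, hx, rfl⟩

lemma prodSupNorm_nonneg (ψ : Fin n → (X →L[𝕜] 𝕜)) : 0 ≤ prodSupNorm ψ :=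
  (norm_nonneg _).trans (le_prodSupNorm ψ (x := 0) (by simp))

lemma prodSupNorm_le (ψ : Fin n → (X →L[𝕜] 𝕜)) {M : ℝ} (hM : 0 ≤ M)
    (h : ∀ x : X, ‖x‖ ≤ 1 → ‖∏ j, ψ j x‖ ≤ M) : prodSupNorm ψ ≤ M :=
  Real.sSup_le (by rintro r ⟨x, hx, rfl⟩; exact h x hx) hM

/-- avoiding finitely many kernels -/
lemma exists_forall_ne_zero :
    ∀ (m : ℕ) (ψ : Fin m → (X →L[𝕜] 𝕜)), (∀ j, ψ j ≠ 0) → ∃ x : X, ∀ j, ψ j x ≠ 0 := by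
  intro m
  induction m with
  | zero => exact fun ψ _ => ⟨0, fun j => absurd j.2 (by omega)⟩
  | succ m ih =>
    intro ψ hψ
    obtain ⟨x, hx⟩ := ih (fun j => ψ j.castSucc) (fun j => hψ _)
    obtain ⟨y, hy⟩ : ∃ y : X, ψ (Fin.last m) y ≠ 0 := by
      by_contra h
      push_neg at h
      exact hψ (Fin.last m) (by ext z; simp [h])
    have hfin : (Set.Finite (⋃ j : Fin (m+1), {t : 𝕜 | ψ j x + t * ψ j y = 0})) := by
      refine Set.finite_iUnion fun j => ?_
      by_cases hjy : ψ j y = 0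
      · have hjx : ψ j x ≠ 0 := by
          rcases Fin.eq_castSucc_or_eq_last j with ⟨j', rfl⟩ | rfl
          · exact hx j'
          · exact absurd hjy hy
        have : {t : 𝕜 | ψ j x + t * ψ j y = 0} = ∅ := by
          ext t; simp [hjy, hjx]
        rw [this]; exact Set.finite_empty
      · apply Set.Subsingleton.finite
        intro a ha b hb
        have h2 : (a - b) * ψ j y = 0 := by
          simp only [Set.mem_setOf_eq] at ha hb
          linear_combination ha - hb
        rcases mul_eq_zero.1 h2 with h | h
        · exact sub_eq_zero.1 h
        · exact absurd h hjy
    obtain ⟨t, ht⟩ := hfin.infinite_compl.nonempty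
    refine ⟨x + t • y, fun j => ?_⟩
    have : ψ j (x + t • y) = ψ j x + t * ψ j y := by
      rw [map_add, map_smul]; rfl
    rw [this]
    intro hzero
    exact ht (Set.mem_iUnion.2 ⟨j, hzero⟩)

lemma prodSupNorm_pos (ψ : Fin n → (X →L[𝕜] 𝕜)) (hψ : ∀ j, ψ j ≠ 0) :
    0 < prodSupNorm ψ := by
  obtain ⟨x, hx⟩ := exists_forall_ne_zero n ψ hψ
  set c : 𝕜 := ((max 1 ‖x‖ : ℝ) : 𝕜)⁻¹ with hc
  have hmax : (0:ℝ) < max 1 ‖x‖ := lt_of_lt_of_le one_pos (le_max_left _ _)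
  have hc0 : c ≠ 0 := by
    simp only [hc, ne_eq, inv_eq_zero]
    exact_mod_cast fun h => absurd h (by positivity)
  have hnorm : ‖c • x‖ ≤ 1 := by
    rw [norm_smul, hc, norm_inv, RCLike.norm_ofReal, abs_of_pos hmax]
    rw [inv_mul_le_iff₀ hmax, mul_one]
    exact le_max_right _ _
  have hval : ∏ j, ψ j (c • x) ≠ 0 := by
    apply Finset.prod_ne_zero_iff.2
    intro j _
    rw [map_smul, smul_eq_mul]
    exact mul_ne_zero hc0 (hx j)
  calc (0:ℝ) < ‖∏ j, ψ j (c • x)‖ := norm_pos_iff.2 hval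
    _ ≤ prodSupNorm ψ := le_prodSupNorm ψ hnorm

lemma prodSupNorm_normalize_le (ψ : Fin n → (X →L[𝕜] 𝕜)) (hψ : ∀ j, ψ j ≠ 0) :
    prodSupNorm (fun j => ((‖ψ j‖ : ℝ) : 𝕜)⁻¹ • ψ j)
      ≤ (∏ j, ‖ψ j‖)⁻¹ * prodSupNorm ψ := by
  have hP : (0:ℝ) < ∏ j, ‖ψ j‖ :=
    Finset.prod_pos (fun j _ => norm_pos_iff.2 (hψ j))
  refine prodSupNorm_le _ (mul_nonneg (by positivity) (prodSupNorm_nonneg ψ)) (fun x hx => ?_)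
  have : ∏ j, (((‖ψ j‖ : ℝ) : 𝕜)⁻¹ • ψ j) x = (∏ j, ((‖ψ j‖ : ℝ) : 𝕜)⁻¹) * ∏ j, ψ j x := by
    rw [← Finset.prod_mul_distrib]
    exact Finset.prod_congr rfl (fun j _ => by
      rw [ContinuousLinearMap.smul_apply, smul_eq_mul])
  calc ‖∏ j, (((‖ψ j‖ : ℝ) : 𝕜)⁻¹ • ψ j) x‖
      = ‖(∏ j, ((‖ψ j‖ : ℝ) : 𝕜)⁻¹)‖ * ‖∏ j, ψ j x‖ := by rw [this, norm_mul]
    _ = (∏ j, ‖ψ j‖)⁻¹ * ‖∏ j, ψ j x‖ := by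
        congr 1
        rw [norm_prod, ← Finset.prod_inv_distrib]
        exact Finset.prod_congr rfl (fun j _ => by
          rw [norm_inv, RCLike.norm_ofReal, abs_of_pos (norm_pos_iff.2 (hψ j))])
    _ ≤ (∏ j, ‖ψ j‖)⁻¹ * prodSupNorm ψ := by
        exact mul_le_mul_of_nonneg_left (le_prodSupNorm ψ hx) (by positivity)


lemma exists_polarization_const [FiniteDimensional 𝕜 X]
    (hX : ∃ φ₀ : X →L[𝕜] 𝕜, ‖φ₀‖ = 1) (n : ℕ) :
    ∃ c : ℝ, 0 ≤ c ∧ ∀ ψ : Fin n → (X →L[𝕜] 𝕜), (∏ j, ‖ψ j‖) ≤ c * prodSupNorm ψ := by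
  classical
  haveI : ProperSpace (X →L[𝕜] 𝕜) := FiniteDimensional.proper 𝕜 _
  set K : Set (Fin n → (X →L[𝕜] 𝕜)) := {ψ | ∀ j, ‖ψ j‖ = 1} with hK
  have hKmem : ∀ ψ ∈ K, ∀ j, ψ j ≠ 0 := by
    intro ψ hψ j h
    have := hψ j
    rw [h] at this
    simp at this
  have hKc : IsCompact K := by
    have hKeq : K = Set.pi Set.univ (fun _ : Fin n => Metric.sphere (0 : X →L[𝕜] 𝕜) 1) := by
      ext ψ
      simp [hK, Set.mem_pi, mem_sphere_zero_iff_norm]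
    rw [hKeq]
    exact isCompact_univ_pi (fun _ => isCompact_sphere 0 1)
  have hwit : ∀ ψ ∈ K, ∃ x : X, ‖x‖ ≤ 1 ∧ prodSupNorm ψ / 2 < ‖∏ j, ψ j x‖ := by
    intro ψ hψ
    have hpos : 0 < prodSupNorm ψ := prodSupNorm_pos ψ (hKmem ψ hψ)
    obtain ⟨r, ⟨x, hx, rfl⟩, hr⟩ :=
      exists_lt_of_lt_csSup (prodSupNorm_set_nonempty ψ) (half_lt_self hpos)
    exact ⟨x, hx, hr⟩
  choose xw hxw1 hxw2 using hwit
  have hcont : ∀ x : X, Continuous (fun φ : Fin n → (X →L[𝕜] 𝕜) => ‖∏ j, φ j x‖) := by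
    intro x
    apply Continuous.norm
    apply continuous_finset_prod
    intro j _
    exact (ContinuousLinearMap.apply 𝕜 𝕜 x).continuous.comp (continuous_apply j)
  obtain ⟨t, ht⟩ := hKc.elim_nhds_subcover'
    (fun ψ hψ => {φ | prodSupNorm ψ / 2 < ‖∏ j, φ j (xw ψ hψ)‖})
    (fun ψ hψ => (isOpen_lt continuous_const (hcont (xw ψ hψ))).mem_nhds (hxw2 ψ hψ))
  -- K is nonempty
  obtain ⟨φ₀, hφ₀⟩ := hX
  have hKne : ((fun _ => φ₀ : Fin n → (X →L[𝕜] 𝕜))) ∈ K := fun j => hφ₀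
  have htne : t.Nonempty := by
    rcases Set.mem_iUnion₂.1 (ht hKne) with ⟨ψ, hψt, _⟩
    exact ⟨ψ, hψt⟩
  set ε : ℝ := t.inf' htne (fun ψ => prodSupNorm ψ.1 / 2) with hε
  have hεpos : 0 < ε := by
    rw [hε]
    refine (Finset.lt_inf'_iff htne).2 fun ψ _ => ?_
    exact half_pos (prodSupNorm_pos ψ.1 (hKmem ψ.1 ψ.2))
  have hεle : ∀ φ ∈ K, ε ≤ prodSupNorm φ := by
    intro φ hφ
    rcases Set.mem_iUnion₂.1 (ht hφ) with ⟨ψ, hψt, hφU⟩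
    have h1 : ε ≤ prodSupNorm ψ.1 / 2 := Finset.inf'_le _ hψt
    have h2 : prodSupNorm ψ.1 / 2 < ‖∏ j, φ j (xw ψ.1 ψ.2)‖ := hφU
    exact h1.trans (h2.le.trans (le_prodSupNorm φ (hxw1 ψ.1 ψ.2)))
  refine ⟨ε⁻¹, inv_nonneg.2 hεpos.le, fun ψ => ?_⟩
  by_cases hψ : ∀ j, ψ j ≠ 0
  · have hP : (0:ℝ) < ∏ j, ‖ψ j‖ := Finset.prod_pos (fun j _ => norm_pos_iff.2 (hψ j))
    set φ : Fin n → (X →L[𝕜] 𝕜) := fun j => ((‖ψ j‖ : ℝ) : 𝕜)⁻¹ • ψ j with hφ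
    have hφK : φ ∈ K := by
      intro j
      have hn : (0:ℝ) < ‖ψ j‖ := norm_pos_iff.2 (hψ j)
      show ‖((‖ψ j‖ : ℝ) : 𝕜)⁻¹ • ψ j‖ = 1
      rw [norm_smul (((‖ψ j‖ : ℝ) : 𝕜)⁻¹) (ψ j), norm_inv, RCLike.norm_ofReal, abs_of_pos hn, inv_mul_cancel₀ hn.ne']
    have key : ε ≤ (∏ j, ‖ψ j‖)⁻¹ * prodSupNorm ψ :=
      (hεle φ hφK).trans (prodSupNorm_normalize_le ψ hψ)
    have h3 : ε * (∏ j, ‖ψ j‖) ≤ prodSupNorm ψ := by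
      calc ε * (∏ j, ‖ψ j‖) ≤ ((∏ j, ‖ψ j‖)⁻¹ * prodSupNorm ψ) * (∏ j, ‖ψ j‖) :=
            mul_le_mul_of_nonneg_right key hP.le
        _ = prodSupNorm ψ := by field_simp
    calc (∏ j, ‖ψ j‖) = ε⁻¹ * (ε * (∏ j, ‖ψ j‖)) := by field_simp
      _ ≤ ε⁻¹ * prodSupNorm ψ := mul_le_mul_of_nonneg_left h3 (inv_nonneg.2 hεpos.le)
  · push_neg at hψ
    obtain ⟨j0, hj0⟩ := hψ
    have : (∏ j, ‖ψ j‖) = 0 := Finset.prod_eq_zero (Finset.mem_univ j0) (by simp [hj0])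
    rw [this]
    exact mul_nonneg (inv_nonneg.2 hεpos.le) (prodSupNorm_nonneg ψ)

end Aux


section PiLpAux
variable {𝕜 : Type*} [RCLike 𝕜] (p : ℝ≥0∞) [Fact (1 ≤ p)]

lemma coord_le_norm (hp : p ≠ ∞) {d : ℕ} (x : PiLp p (fun _ : Fin d => 𝕜)) (i : Fin d) :
    ‖x i‖ ≤ ‖x‖ := by
  have hpt : 0 < p.toReal :=
    ENNReal.toReal_pos ((zero_lt_one.trans_le (Fact.out : 1 ≤ p)).ne') hp
  rw [PiLp.norm_eq_sum hpt]
  have h1 : ‖x i‖ ^ p.toReal ≤ ∑ j, ‖x j‖ ^ p.toReal :=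
    Finset.single_le_sum (fun j _ => Real.rpow_nonneg (norm_nonneg _) _) (Finset.mem_univ i)
  calc ‖x i‖ = (‖x i‖ ^ p.toReal) ^ (1 / p.toReal) := by
        rw [← Real.rpow_mul (norm_nonneg _), mul_one_div, div_self hpt.ne', Real.rpow_one]
    _ ≤ (∑ j, ‖x j‖ ^ p.toReal) ^ (1 / p.toReal) :=
        Real.rpow_le_rpow (Real.rpow_nonneg (norm_nonneg _) _) h1 (by positivity)

lemma norm_proj_eq_one (hp : p ≠ ∞) {d : ℕ} (i : Fin d) :
    ‖(PiLp.proj p (fun _ : Fin d => 𝕜) i : PiLp p (fun _ : Fin d => 𝕜) →L[𝕜] 𝕜)‖ = 1 := by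
  apply le_antisymm
  · refine ContinuousLinearMap.opNorm_le_bound _ zero_le_one (fun x => ?_)
    rw [one_mul, PiLp.proj_apply]
    exact coord_le_norm p hp x i
  · set y : PiLp p (fun _ : Fin d => 𝕜) :=
      (WithLp.equiv p (∀ _ : Fin d, 𝕜)).symm (Pi.single i (1:𝕜)) with hy
    have h := (PiLp.proj (𝕜 := 𝕜) p (fun _ : Fin d => 𝕜) i).le_opNorm y
    rw [hy, show ‖(WithLp.equiv p (∀ _ : Fin d, 𝕜)).symm (Pi.single i (1:𝕜))‖ = ‖(1:𝕜)‖ from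
      PiLp.norm_toLp_single p _ i 1] at h
    simpa using h

lemma prod_fiber {M : Type*} [CommMonoid M] {d k n : ℕ} (hn : n = d * k)
    (idx : Fin n → Fin d) (hidx : ∀ j, (idx j : ℕ) = j.1 / k) (f : Fin d → M) :
    ∏ j : Fin n, f (idx j) = ∏ v : Fin d, f v ^ k := by
  rw [Fintype.prod_equiv ((finCongr hn).trans finProdFinEquiv.symm)
    (fun j => f (idx j)) (fun ab => f ab.1) (fun j => by
      show f (idx j) = f (((finCongr hn).trans finProdFinEquiv.symm) j).1
      congr 1
      apply Fin.ext
      rw [hidx j]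
      rfl)]
  rw [Fintype.prod_prod_type]
  exact Finset.prod_congr rfl (fun v _ => by
    simp [Finset.prod_const])
end PiLpAux


/-- For 1 ≤ p < 2 and n = dk, there are norm-one functionals on `ℓ_p^d` (k copies of each
coordinate functional) whose product has sup norm exactly `d^(-n/p)`; consequently
`c_n(ℓ_p^d) ≥ d^(n/p)`. -/
theorem polarizationConstant_lp_lower_bound {𝕜 : Type*} [RCLike 𝕜]
    (p : ℝ≥0∞) [Fact (1 ≤ p)] (hp2 : p < 2) (d k : ℕ) (hd : 1 ≤ d) (hk : 1 ≤ k)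
    (n : ℕ) (hn : n = d * k) :
    (∃ ψ : Fin n → (PiLp p (fun _ : Fin d => 𝕜) →L[𝕜] 𝕜),
        (∀ j, ‖ψ j‖ = 1) ∧
          prodSupNorm ψ = (d : ℝ) ^ (-(n : ℝ) / p.toReal)) ∧
      (d : ℝ) ^ ((n : ℝ) / p.toReal)
        ≤ polarizationConstant 𝕜 (PiLp p (fun _ : Fin d => 𝕜)) n := by
  classical
  have hptop : p ≠ ∞ := ne_top_of_lt hp2
  set pt := p.toReal with hptdef
  have hpt1 : (1:ℝ) ≤ pt := by
    rw [hptdef, ← ENNReal.toReal_one]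
    exact ENNReal.toReal_mono hptop (Fact.out)
  have hpt : 0 < pt := lt_of_lt_of_le one_pos hpt1
  have hd0 : (0:ℝ) < d := by exact_mod_cast Nat.lt_of_lt_of_le Nat.zero_lt_one hd
  have hn1 : 1 ≤ n := by
    rw [hn]; exact Nat.one_le_iff_ne_zero.2 (by positivity)
  have hlt : ∀ j : Fin n, j.1 / k < d := fun j => by
    have h2 := j.2
    exact (Nat.div_lt_iff_lt_mul (by omega)).2 (by omega)
  set idx : Fin n → Fin d := fun j => ⟨j.1 / k, hlt j⟩ with hidxdef
  set ψ : Fin n → (PiLp p (fun _ : Fin d => 𝕜) →L[𝕜] 𝕜) :=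
    fun j => PiLp.proj p (fun _ : Fin d => 𝕜) (idx j) with hψdef
  have hψnorm : ∀ j, ‖ψ j‖ = 1 := fun j => norm_proj_eq_one p hptop (idx j)
  have hψval : ∀ (x : PiLp p (fun _ : Fin d => 𝕜)) (j : Fin n), ψ j x = x (idx j) :=
    fun x j => rfl
  set c : ℝ := (d:ℝ) ^ (-(1:ℝ)/pt) with hcdef
  have hcpos : 0 < c := Real.rpow_pos_of_pos hd0 _
  set x₀ : PiLp p (fun _ : Fin d => 𝕜) :=
    (WithLp.equiv p (∀ _ : Fin d, 𝕜)).symm (fun _ => ((c:ℝ):𝕜)) with hx₀def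
  have hx₀coord : ∀ v : Fin d, x₀ v = ((c:ℝ):𝕜) := fun v => rfl
  have hcpt : c ^ pt = (d:ℝ)⁻¹ := by
    rw [hcdef, ← Real.rpow_mul hd0.le, div_mul_cancel₀ _ hpt.ne', Real.rpow_neg_one]
  have hx₀norm : ‖x₀‖ = 1 := by
    rw [PiLp.norm_eq_sum hpt]
    have hcong : ∀ v : Fin d, v ∈ Finset.univ → ‖x₀ v‖ ^ pt = c ^ pt := fun v _ => by
      rw [hx₀coord, RCLike.norm_ofReal, abs_of_pos hcpos]
    rw [Finset.sum_congr rfl hcong, Finset.sum_const, Finset.card_univ,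
      Fintype.card_fin, nsmul_eq_mul, hcpt, mul_inv_cancel₀ hd0.ne', Real.one_rpow]
  have hprodx₀ : ‖∏ j, ψ j x₀‖ = (d:ℝ) ^ (-(n:ℝ)/pt) := by
    have h1 : ∏ j, ψ j x₀ = ((c:ℝ):𝕜) ^ n := by
      rw [Finset.prod_congr rfl (fun j _ => (hψval x₀ j).trans (hx₀coord (idx j))),
        Finset.prod_const, Finset.card_univ, Fintype.card_fin]
    rw [h1, norm_pow, RCLike.norm_ofReal, abs_of_pos hcpos, hcdef,
      ← Real.rpow_natCast ((d:ℝ) ^ (-(1:ℝ)/pt)) n, ← Real.rpow_mul hd0.le]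
    congr 1
    ring
  have hub : ∀ x : PiLp p (fun _ : Fin d => 𝕜), ‖x‖ ≤ 1 →
      ‖∏ j, ψ j x‖ ≤ (d:ℝ) ^ (-(n:ℝ)/pt) := by
    intro x hx
    rw [norm_prod, Finset.prod_congr rfl (fun j _ => by rw [hψval x j]),
      prod_fiber hn idx (fun j => rfl) (fun v => ‖x v‖), Finset.prod_pow]
    set P : ℝ := ∏ v, ‖x v‖ with hPdef
    have hP0 : 0 ≤ P := Finset.prod_nonneg fun v _ => norm_nonneg _
    have hS : ∑ v, ‖x v‖ ^ pt ≤ 1 := by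
      have h2 := hx
      rw [PiLp.norm_eq_sum hpt] at h2
      have hS0 : 0 ≤ ∑ v, ‖x v‖ ^ pt :=
        Finset.sum_nonneg fun v _ => Real.rpow_nonneg (norm_nonneg _) _
      calc ∑ v, ‖x v‖ ^ pt = ((∑ v, ‖x v‖ ^ pt) ^ (1/pt)) ^ pt := by
            rw [← Real.rpow_mul hS0, one_div, inv_mul_cancel₀ hpt.ne', Real.rpow_one]
        _ ≤ 1 ^ pt := Real.rpow_le_rpow (Real.rpow_nonneg hS0 _) h2 hpt.le
        _ = 1 := Real.one_rpow pt
    have hgm := Real.geom_mean_le_arith_mean_weighted Finset.univ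
      (fun _ : Fin d => (d:ℝ)⁻¹) (fun v => ‖x v‖ ^ pt)
      (fun v _ => by positivity)
      (by rw [Finset.sum_const, Finset.card_univ, Fintype.card_fin, nsmul_eq_mul,
        mul_inv_cancel₀ hd0.ne'])
      (fun v _ => Real.rpow_nonneg (norm_nonneg _) _)
    have hL : P ^ (pt * (d:ℝ)⁻¹) ≤ (d:ℝ)⁻¹ := by
      have hLHS : ∏ v, (‖x v‖ ^ pt) ^ ((d:ℝ)⁻¹) = P ^ (pt * (d:ℝ)⁻¹) := by
        rw [hPdef, ← Real.finset_prod_rpow Finset.univ _ (fun v _ => norm_nonneg _) _]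
        exact Finset.prod_congr rfl fun v _ => (Real.rpow_mul (norm_nonneg _) _ _).symm
      calc P ^ (pt * (d:ℝ)⁻¹) = ∏ v, (‖x v‖ ^ pt) ^ ((d:ℝ)⁻¹) := hLHS.symm
        _ ≤ ∑ v, (d:ℝ)⁻¹ * ‖x v‖ ^ pt := hgm
        _ = (d:ℝ)⁻¹ * ∑ v, ‖x v‖ ^ pt := by rw [← Finset.mul_sum]
        _ ≤ (d:ℝ)⁻¹ * 1 := mul_le_mul_of_nonneg_left hS (by positivity)
        _ = (d:ℝ)⁻¹ := mul_one _
    have hexp : (pt * (d:ℝ)⁻¹) * ((d:ℝ) * (k:ℝ) / pt) = (k:ℝ) := by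
      field_simp
    calc P ^ k = (P ^ (pt * (d:ℝ)⁻¹)) ^ ((d:ℝ) * (k:ℝ) / pt) := by
          rw [← Real.rpow_natCast P k, ← Real.rpow_mul hP0, hexp]
      _ ≤ ((d:ℝ)⁻¹) ^ ((d:ℝ)*(k:ℝ)/pt) :=
          Real.rpow_le_rpow (Real.rpow_nonneg hP0 _) hL (by positivity)
      _ = (d:ℝ) ^ (-(n:ℝ)/pt) := by
          rw [← Real.rpow_neg_one (d:ℝ), ← Real.rpow_mul hd0.le]
          congr 1
          have : (n:ℝ) = (d:ℝ) * (k:ℝ) := by rw [hn]; push_cast; ring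
          rw [this]; ring
  have hg : prodSupNorm ψ = (d:ℝ) ^ (-(n:ℝ)/pt) := by
    apply IsGreatest.csSup_eq
    constructor
    · exact ⟨x₀, hx₀norm.le, hprodx₀.symm⟩
    · rintro r ⟨x, hx, rfl⟩
      exact hub x hx
  refine ⟨⟨ψ, hψnorm, hg⟩, ?_⟩
  obtain ⟨c₀, hc₀0, hc₀⟩ := exists_polarization_const
    (𝕜 := 𝕜) (X := PiLp p (fun _ : Fin d => 𝕜))
    ⟨ψ ⟨0, by omega⟩, hψnorm _⟩ n
  refine le_csInf ⟨c₀, hc₀0, hc₀⟩ ?_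
  rintro b ⟨hb0, hb⟩
  have h1 := hb ψ
  rw [Finset.prod_congr rfl (fun j _ => hψnorm j), Finset.prod_const_one, hg] at h1
  set w : ℝ := (d:ℝ)^((n:ℝ)/pt) with hw
  have hwpos : 0 < w := Real.rpow_pos_of_pos hd0 _
  have hinv : (d:ℝ)^(-(n:ℝ)/pt) = w⁻¹ := by
    rw [hw, ← Real.rpow_neg hd0.le]
    congr 1
    ring
  rw [hinv] at h1
  have h3 := mul_le_mul_of_nonneg_left h1 hwpos.le
  rw [mul_one] at h3
  calc w ≤ w * (b * w⁻¹) := h3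
    _ = b := by rw [mul_comm b w⁻¹, ← mul_assoc, mul_inv_cancel₀ hwpos.ne', one_mul]
end

section
/- Let P : X → ℂ be a continuous n-homogeneous polynomial on a complex Banach space X (n ≥ 2). Then for any two vectors w, z in the closed unit ball of X, |P(w) − P(z)| ≤ n·e·‖P‖·‖w − z‖, where ‖P‖ = sup_{‖x‖≤1} |P(x)|. -/
/-- Lipschitz estimate on the unit ball for a continuous n-homogeneous polynomial
(the diagonal of a continuous n-multilinear map) on a complex Banach space:
|P(w) − P(z)| ≤ n·e·‖P‖·‖w − z‖, where ‖P‖ is the sup of |P| on the unit ball. -/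
theorem homogeneous_polynomial_lipschitz_on_ball
    {X : Type*} [NormedAddCommGroup X] [NormedSpace ℂ X] [CompleteSpace X]
    {n : ℕ} (hn : 2 ≤ n) (M : ContinuousMultilinearMap ℂ (fun _ : Fin n => X) ℂ)
    (P : X → ℂ) (hP : ∀ x, P x = M (fun _ => x))
    (w z : X) (hw : ‖w‖ ≤ 1) (hz : ‖z‖ ≤ 1) :
    ‖P w - P z‖ ≤ n * Real.exp 1 *
      sSup {r : ℝ | ∃ x : X, ‖x‖ ≤ 1 ∧ r = ‖P x‖} * ‖w - z‖ := by
  set S := sSup {r : ℝ | ∃ x : X, ‖x‖ ≤ 1 ∧ r = ‖P x‖} with hSdef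
  have hbdd : BddAbove {r : ℝ | ∃ x : X, ‖x‖ ≤ 1 ∧ r = ‖P x‖} := by
    refine ⟨‖M‖, ?_⟩
    rintro r ⟨x, hx, rfl⟩
    rw [hP]
    calc ‖M fun _ => x‖ ≤ ‖M‖ * ∏ _i : Fin n, ‖x‖ := M.le_opNorm _
      _ ≤ ‖M‖ * 1 := by
          apply mul_le_mul_of_nonneg_left _ (norm_nonneg M)
          rw [Finset.prod_const]
          exact pow_le_one₀ (norm_nonneg x) hx
      _ = ‖M‖ := mul_one _
  have hSx : ∀ x : X, ‖x‖ ≤ 1 → ‖P x‖ ≤ S := fun x hx => le_csSup hbdd ⟨x, hx, rfl⟩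
  have hS0 : 0 ≤ S := le_trans (norm_nonneg _) (hSx 0 (by simp))
  have hPzero : P 0 = 0 := by
    rw [hP]; exact M.map_coord_zero ⟨0, by omega⟩ rfl
  have hPy : ∀ y : X, ‖P y‖ ≤ S * ‖y‖ ^ n := by
    intro y
    rcases eq_or_ne y 0 with rfl | hy
    · simp only [hPzero, norm_zero, norm_zero]
      positivity
    · have hc : (0:ℝ) < ‖y‖ := norm_pos_iff.mpr hy
      set u : X := (‖y‖:ℂ)⁻¹ • y with hu_def
      have hcC : (‖y‖:ℂ) ≠ 0 := by exact_mod_cast hc.ne'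
      have hu : ‖u‖ = 1 := by
        rw [hu_def, norm_smul, norm_inv, Complex.norm_real, Real.norm_eq_abs,
          abs_of_pos hc, inv_mul_cancel₀ hc.ne']
      have hy' : y = (‖y‖ : ℂ) • u := by
        rw [hu_def, smul_smul, mul_inv_cancel₀ hcC, one_smul]
      have hsm : M (fun _ : Fin n => (‖y‖:ℂ) • u)
          = (∏ _i : Fin n, (‖y‖:ℂ)) • M (fun _ => u) := M.map_smul_univ _ _
      calc ‖P y‖ = ‖P ((‖y‖:ℂ) • u)‖ := by rw [← hy']
        _ = ‖y‖ ^ n * ‖P u‖ := by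
            rw [hP, hP, hsm, norm_smul, Finset.prod_const, Finset.card_univ,
              Fintype.card_fin, norm_pow, Complex.norm_real, Real.norm_eq_abs,
              abs_of_pos hc]
        _ ≤ ‖y‖ ^ n * S := by
            exact mul_le_mul_of_nonneg_left (hSx u hu.le) (by positivity)
        _ = S * ‖y‖ ^ n := mul_comm _ _
  rcases eq_or_ne w z with rfl | hwz
  · simp only [sub_self, norm_zero, mul_zero]
    exact le_rfl
  set δ := ‖w - z‖ with hδdef
  have hδ : 0 < δ := norm_pos_iff.mpr (sub_ne_zero.mpr hwz)
  set m : ℕ := n - 1 with hm_def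
  have hnm : n = m + 1 := by omega
  have hm1 : (1:ℝ) ≤ (m:ℝ) := by exact_mod_cast Nat.one_le_iff_ne_zero.mpr (by omega)
  have hm0 : (0:ℝ) < (m:ℝ) := lt_of_lt_of_le one_pos hm1
  set a : ℝ := 1 + 1/(m:ℝ) with ha_def
  have ha0 : (0:ℝ) ≤ a := by positivity
  set r : ℝ := ((m:ℝ) * δ)⁻¹ with hr_def
  have hr : 0 < r := by positivity
  set g : ℂ → ℂ := fun ζ => M (fun _ : Fin n => z + ζ • (w - z)) with hg_def
  have hgdiff : Differentiable ℂ g := by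
    have h1 : Differentiable ℂ (fun ζ : ℂ => z + ζ • (w - z)) :=
      (differentiable_id.smul_const _).const_add _
    exact ((M.contDiff (n := 1)).differentiable one_ne_zero).comp
      (differentiable_pi.mpr fun _ => h1)
  have hgP : ∀ ζ : ℂ, g ζ = P (z + ζ • (w - z)) := fun ζ => (hP _).symm
  -- points of the segment are in the unit ball
  have hseg : ∀ t : ℝ, t ∈ Set.Icc (0:ℝ) 1 → ‖z + (t:ℂ) • (w - z)‖ ≤ 1 := by
    intro t ht
    have heq : z + (t:ℂ) • (w - z) = ((1-t:ℝ):ℂ) • z + (t:ℂ) • w := by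
      push_cast
      rw [smul_sub, sub_smul, one_smul]
      abel
    rw [heq]
    calc ‖((1-t:ℝ):ℂ) • z + (t:ℂ) • w‖
        ≤ ‖((1-t:ℝ):ℂ) • z‖ + ‖(t:ℂ) • w‖ := norm_add_le _ _
      _ ≤ (1-t) * 1 + t * 1 := by
          rw [norm_smul, norm_smul, Complex.norm_real, Complex.norm_real,
            Real.norm_eq_abs, Real.norm_eq_abs, abs_of_nonneg (by linarith [ht.2]),
            abs_of_nonneg ht.1]
          exact add_le_add (mul_le_mul_of_nonneg_left hz (by linarith [ht.2]))
            (mul_le_mul_of_nonneg_left hw ht.1)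
      _ = 1 := by ring
  -- bound |g| on discs of radius r centred at segment points
  have hgbound : ∀ t : ℝ, t ∈ Set.Icc (0:ℝ) 1 → ∀ ζ ∈ Metric.sphere (t:ℂ) r,
      ‖g ζ‖ ≤ S * a ^ n := by
    intro t ht ζ hζ
    have hdist : ‖ζ - (t:ℂ)‖ = r := by
      simpa [Complex.dist_eq] using hζ
    have hnorm : ‖z + ζ • (w - z)‖ ≤ a := by
      have heq : z + ζ • (w - z) = (z + (t:ℂ) • (w - z)) + (ζ - (t:ℂ)) • (w - z) := by
        rw [sub_smul]; abel
      rw [heq]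
      calc ‖(z + (t:ℂ) • (w - z)) + (ζ - (t:ℂ)) • (w - z)‖
          ≤ ‖z + (t:ℂ) • (w - z)‖ + ‖(ζ - (t:ℂ)) • (w - z)‖ := norm_add_le _ _
        _ ≤ 1 + r * δ := by
            rw [norm_smul, hdist]
            exact add_le_add (hseg t ht) le_rfl
        _ = a := by
            rw [ha_def, hr_def]
            field_simp
    rw [hgP]
    calc ‖P (z + ζ • (w - z))‖ ≤ S * ‖z + ζ • (w - z)‖ ^ n := hPy _
      _ ≤ S * a ^ n := by
          exact mul_le_mul_of_nonneg_left (pow_le_pow_left₀ (norm_nonneg _) hnorm n) hS0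
  -- Cauchy estimate for the derivative on the segment
  have hderiv : ∀ t : ℝ, t ∈ Set.Icc (0:ℝ) 1 →
      ‖deriv g (t:ℂ)‖ ≤ S * a ^ n / r := by
    intro t ht
    exact Complex.norm_deriv_le_of_forall_mem_sphere_norm_le hr
      hgdiff.diffContOnCl (hgbound t ht)
  set C : ℝ := S * a ^ n / r with hC_def
  -- mean value inequality on the segment from 0 to 1
  have hseg_eq : ∀ x ∈ segment ℝ (0:ℂ) 1, ∃ t : ℝ, t ∈ Set.Icc (0:ℝ) 1 ∧ x = (t:ℂ) := by
    intro x hx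
    rw [segment_eq_image] at hx
    obtain ⟨t, ht, hxt⟩ := hx
    refine ⟨t, ht, ?_⟩
    rw [← hxt]
    simp [Complex.real_smul]
  have key : ‖g 1 - g 0‖ ≤ C * ‖(1:ℂ) - 0‖ := by
    refine (convex_segment _ _).norm_image_sub_le_of_norm_fderiv_le
      (fun x _ => hgdiff.differentiableAt) ?_
      (left_mem_segment ℝ (0:ℂ) 1) (right_mem_segment ℝ (0:ℂ) 1)
    intro x hx
    obtain ⟨t, ht, rfl⟩ := hseg_eq x hx
    rw [← norm_deriv_eq_norm_fderiv]
    exact hderiv t ht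
  have hg1 : g 1 = P w := by
    rw [hgP]; congr 1; rw [one_smul]; abel
  have hg0 : g 0 = P z := by
    rw [hgP]; congr 1; rw [zero_smul, add_zero]
  have hexp : a ^ m ≤ Real.exp 1 := by
    have h1 : a ≤ Real.exp (1/(m:ℝ)) := by
      have := Real.add_one_le_exp (1/(m:ℝ))
      linarith
    calc a ^ m ≤ Real.exp (1/(m:ℝ)) ^ m := pow_le_pow_left₀ ha0 h1 m
      _ = Real.exp ((m:ℝ) * (1/(m:ℝ))) := (Real.exp_nat_mul _ m).symm
      _ = Real.exp 1 := by rw [mul_one_div, div_self hm0.ne']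
  have ham : a * (m:ℝ) = (n:ℝ) := by
    rw [ha_def, hnm]
    push_cast
    field_simp
  have han : a ^ n * (m:ℝ) ≤ (n:ℝ) * Real.exp 1 := by
    calc a ^ n * (m:ℝ) = a ^ m * (a * (m:ℝ)) := by rw [hnm, pow_succ]; ring
      _ = a ^ m * (n:ℝ) := by rw [ham]
      _ ≤ Real.exp 1 * (n:ℝ) := mul_le_mul_of_nonneg_right hexp (Nat.cast_nonneg n)
      _ = (n:ℝ) * Real.exp 1 := mul_comm _ _
  have hCval : C = S * a ^ n * ((m:ℝ) * δ) := by
    rw [hC_def, hr_def, div_eq_mul_inv, inv_inv]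
  have hCle : C ≤ (n:ℝ) * Real.exp 1 * S * δ := by
    rw [hCval]
    have h := mul_le_mul_of_nonneg_right
      (mul_le_mul_of_nonneg_right han hS0) hδ.le
    nlinarith
  calc ‖P w - P z‖ = ‖g 1 - g 0‖ := by rw [hg1, hg0]
    _ ≤ C * ‖(1:ℂ) - 0‖ := key
    _ = C := by simp
    _ ≤ (n:ℝ) * Real.exp 1 * S * δ := hCle
end

section
/- Let P : ℂ^d → ℂ be an n-homogeneous polynomial (n ≥ 1) with supremum norm ‖P‖ over the closed ℓ_∞ unit ball. Suppose w₁,…,w_M are points of the unit ball such that every point of the d-torus 𝕋^d is within ℓ_∞-distance 1/(2ne) of some w_i, and suppose |P(w_i)| ≤ R for all i. Then ‖P‖ ≤ 2R. -/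
open Metric Set

/-- If an n-homogeneous polynomial on ℂ^d (with the sup norm) is bounded by R on a
1/(2ne)-net (in ℓ_∞ distance) of the d-torus consisting of points of the unit ball,
then its sup norm over the closed unit polydisc is at most 2R. -/
theorem sup_norm_le_of_bound_on_net
    {d n m : ℕ} (hn : 1 ≤ n)
    (M : ContinuousMultilinearMap ℂ (fun _ : Fin n => (Fin d → ℂ)) ℂ)
    (P : (Fin d → ℂ) → ℂ) (hP : ∀ x, P x = M (fun _ => x))
    (w : Fin m → (Fin d → ℂ)) (hw : ∀ i, ‖w i‖ ≤ 1)
    (hnet : ∀ z : Fin d → ℂ, (∀ j, ‖z j‖ = 1) →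
      ∃ i, ‖z - w i‖ ≤ 1 / (2 * n * Real.exp 1))
    (R : ℝ) (hbound : ∀ i, ‖P (w i)‖ ≤ R) :
    ∀ x : Fin d → ℂ, ‖x‖ ≤ 1 → ‖P x‖ ≤ 2 * R := by
  classical
  have epos : (0:ℝ) < Real.exp 1 := Real.exp_pos 1
  have npos : (0:ℝ) < n := by exact_mod_cast hn
  set δ : ℝ := 1 / (2 * n * Real.exp 1) with hδ
  have hδpos : 0 < δ := by positivity
  -- differentiability of P
  have hdiff : Differentiable ℂ P := by
    have h1 : Differentiable ℂ (fun x : Fin d → ℂ => M (fun _ : Fin n => x)) := by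
      intro x
      have := HasFDerivAt.multilinear_comp (f := M)
        (g := fun _ : Fin n => (fun v : Fin d → ℂ => v))
        (g' := fun _ : Fin n => ContinuousLinearMap.id ℂ (Fin d → ℂ)) (x := x)
        (fun _ => hasFDerivAt_id x)
      exact this.differentiableAt
    have : P = fun x => M (fun _ => x) := funext hP
    rw [this]; exact h1
  -- homogeneity
  have homog : ∀ (c : ℂ) (x : Fin d → ℂ), P (c • x) = c ^ n * P x := by
    intro c x
    rw [hP, hP]
    have := M.map_smul_univ (fun _ : Fin n => c) (fun _ : Fin n => x)
    simpa [Finset.prod_const, smul_eq_mul] using this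
  -- maximum of |P| over the closed unit ball
  obtain ⟨x₀, hx₀, hmax'⟩ := (isCompact_closedBall (0 : Fin d → ℂ) 1).exists_isMaxOn
    (nonempty_closedBall.2 zero_le_one)
    ((continuous_norm.comp hdiff.continuous).continuousOn)
  have hmax : ∀ y : Fin d → ℂ, ‖y‖ ≤ 1 → ‖P y‖ ≤ ‖P x₀‖ :=
    fun y hy => hmax' (mem_closedBall_zero_iff.2 hy)
  set S : ℝ := ‖P x₀‖ with hSdef
  have hS0 : 0 ≤ S := norm_nonneg _
  have hx₀1 : ‖x₀‖ ≤ 1 := mem_closedBall_zero_iff.1 hx₀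
  -- growth estimate
  have growth : ∀ x : Fin d → ℂ, ‖P x‖ ≤ S * ‖x‖ ^ n := by
    intro x
    rcases eq_or_ne x 0 with rfl | hx
    · have hP0 : P 0 = 0 := by
        have h0 := homog 0 0
        rw [smul_zero] at h0
        rw [h0, zero_pow (by omega : n ≠ 0), zero_mul]
      rw [hP0]
      simp [zero_pow (by omega : n ≠ 0)]
    · have hnx : (0:ℝ) < ‖x‖ := norm_pos_iff.2 hx
      have hxC : ((‖x‖ : ℂ)) ≠ 0 := by exact_mod_cast hnx.ne'
      have hxu : ‖(‖x‖ : ℂ)⁻¹ • x‖ ≤ 1 := by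
        rw [norm_smul, norm_inv, Complex.norm_real, Real.norm_eq_abs, abs_of_pos hnx,
          inv_mul_cancel₀ hnx.ne']
      have hdecomp : P x = (‖x‖ : ℂ) ^ n * P ((‖x‖ : ℂ)⁻¹ • x) := by
        rw [← homog]
        congr 1
        rw [smul_smul, mul_inv_cancel₀ hxC, one_smul]
      rw [hdecomp, norm_mul, norm_pow, Complex.norm_real, Real.norm_eq_abs, abs_of_pos hnx, mul_comm]
      exact mul_le_mul_of_nonneg_right (hmax _ hxu) (by positivity)
  -- (1+1/n)^n ≤ e
  have hexp : (1 + 1/(n:ℝ)) ^ n ≤ Real.exp 1 := by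
    have h1 : (1 + 1/(n:ℝ)) ≤ Real.exp (1/(n:ℝ)) := by
      have := Real.add_one_le_exp (1/(n:ℝ)); linarith
    calc (1 + 1/(n:ℝ)) ^ n ≤ Real.exp (1/(n:ℝ)) ^ n :=
          pow_le_pow_left₀ (by positivity) h1 n
      _ = Real.exp 1 := by
          rw [← Real.exp_nat_mul]
          congr 1
          field_simp
  -- derivative bound (Harris / Cauchy estimate)
  have fbound : ∀ z : Fin d → ℂ, ‖z‖ ≤ 1 → ‖fderiv ℂ P z‖ ≤ n * Real.exp 1 * S := by
    intro z hz
    apply ContinuousLinearMap.opNorm_le_bound _ (by positivity)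
    intro y
    rcases eq_or_ne y 0 with rfl | hy
    · simp
    have hny : (0:ℝ) < ‖y‖ := norm_pos_iff.2 hy
    set r : ℝ := 1 / (n * ‖y‖) with hr
    have hrpos : 0 < r := by positivity
    have hgdiff : Differentiable ℂ (fun t : ℂ => P (z + t • y)) := by
      intro t
      have h1 : HasDerivAt (fun t : ℂ => z + t • y) y t := by
        simpa using ((hasDerivAt_id t).smul_const y).const_add z
      exact ((hdiff (z + t • y)).hasFDerivAt.comp_hasDerivAt t h1).differentiableAt
    have hderiv : HasDerivAt (fun t : ℂ => P (z + t • y)) (fderiv ℂ P z y) 0 := by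
      have h1 : HasDerivAt (fun t : ℂ => z + t • y) y 0 := by
        simpa using ((hasDerivAt_id (0:ℂ)).smul_const y).const_add z
      have h2 := ((hdiff (z + (0:ℂ) • y)).hasFDerivAt).comp_hasDerivAt (0:ℂ) h1
      have h0 : z + (0:ℂ) • y = z := by simp
      rw [h0] at h2
      exact h2
    have sb : ∀ t : ℂ, t ∈ sphere (0:ℂ) r → ‖P (z + t • y)‖ ≤ S * Real.exp 1 := by
      intro t ht
      have habs : ‖t‖ = r := mem_sphere_zero_iff_norm.1 ht
      have hle : ‖z + t • y‖ ≤ 1 + 1/(n:ℝ) := by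
        calc ‖z + t • y‖ ≤ ‖z‖ + ‖t‖ * ‖y‖ := by
              refine (norm_add_le _ _).trans ?_
              rw [norm_smul]
            _ ≤ 1 + 1/(n:ℝ) := by
              rw [habs, hr]
              have : 1 / ((n:ℝ) * ‖y‖) * ‖y‖ = 1/(n:ℝ) := by field_simp
              rw [this]
              linarith
      calc ‖P (z + t • y)‖ = ‖P (z + t • y)‖ := rfl
        _ ≤ S * ‖z + t • y‖ ^ n := growth _
        _ ≤ S * (1 + 1/(n:ℝ)) ^ n := by
            exact mul_le_mul_of_nonneg_left (pow_le_pow_left₀ (norm_nonneg _) hle n) hS0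
        _ ≤ S * Real.exp 1 := mul_le_mul_of_nonneg_left hexp hS0
    have hc := Complex.norm_deriv_le_of_forall_mem_sphere_norm_le hrpos
      hgdiff.diffContOnCl sb
    rw [hderiv.deriv] at hc
    have hrval : S * Real.exp 1 / r = n * Real.exp 1 * S * ‖y‖ := by
      rw [hr]
      field_simp
    rw [hrval] at hc
    exact hc
  -- Lipschitz estimate on the unit ball
  have lip : ∀ a b : Fin d → ℂ, ‖a‖ ≤ 1 → ‖b‖ ≤ 1 →
      ‖P a - P b‖ ≤ n * Real.exp 1 * S * ‖a - b‖ := by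
    intro a b ha hb
    have := (convex_closedBall (0 : Fin d → ℂ) 1).norm_image_sub_le_of_norm_fderiv_le
      (f := P) (fun x _ => hdiff x)
      (fun x hx => fbound x (mem_closedBall_zero_iff.1 hx))
      (mem_closedBall_zero_iff.2 hb) (mem_closedBall_zero_iff.2 ha)
    exact this
  -- interior bound via Möbius maps and maximum modulus
  have halfS : ∀ x : Fin d → ℂ, ‖x‖ < 1 → ‖P x‖ ≤ R + S / 2 := by
    intro x hx
    have hxj : ∀ j, ‖x j‖ < 1 := by
      intro j
      have := norm_le_pi_norm x j
      exact lt_of_le_of_lt this hx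
    set G : ℂ → (Fin d → ℂ) :=
      fun t => fun j => (t + x j) / (1 + (starRingEnd ℂ) (x j) * t) with hG
    have hden : ∀ (j : Fin d) (t : ℂ), ‖t‖ ≤ 1 →
        1 + (starRingEnd ℂ) (x j) * t ≠ 0 := by
      intro j t ht h
      have h1 : ‖(starRingEnd ℂ) (x j) * t‖ < 1 := by
        rw [norm_mul, Complex.norm_conj]
        calc ‖x j‖ * ‖t‖ ≤ ‖x j‖ * 1 :=
              mul_le_mul_of_nonneg_left ht (norm_nonneg _)
          _ < 1 := by rw [mul_one]; exact hxj j
      have h2 : (starRingEnd ℂ) (x j) * t = -1 := by linear_combination h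
      rw [h2] at h1
      simp at h1
    have hGdiff : ∀ t : ℂ, ‖t‖ ≤ 1 → DifferentiableAt ℂ G t := by
      intro t ht
      rw [hG]
      apply differentiableAt_pi.2
      intro j
      exact DifferentiableAt.div (differentiableAt_id.add_const _)
        ((differentiableAt_const _).add ((differentiableAt_const _).mul differentiableAt_id))
        (hden j t ht)
    have hFdiff : DifferentiableOn ℂ (fun t => P (G t)) (closedBall (0:ℂ) 1) := by
      intro t ht
      have habs : ‖t‖ ≤ 1 := by
        exact mem_closedBall_zero_iff.1 ht
      exact ((hdiff (G t)).comp t (hGdiff t habs)).differentiableWithinAt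
    have hdc : DiffContOnCl ℂ (fun t => P (G t)) (ball (0:ℂ) 1) :=
      ⟨hFdiff.mono ball_subset_closedBall, by
        rw [closure_ball (0:ℂ) one_ne_zero]; exact hFdiff.continuousOn⟩
    have hfront : ∀ t ∈ frontier (ball (0:ℂ) 1), ‖P (G t)‖ ≤ R + S / 2 := by
      intro t ht
      rw [frontier_ball (0:ℂ) one_ne_zero] at ht
      have habs : ‖t‖ = 1 := by
        exact mem_sphere_zero_iff_norm.1 ht
      have ht1 : t * (starRingEnd ℂ) t = 1 := by
        rw [Complex.mul_conj]
        rw [Complex.normSq_eq_norm_sq, habs]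
        norm_num
      have hzj : ∀ j, ‖G t j‖ = 1 := by
        intro j
        have hd := hden j t habs.le
        have hconj : t * (starRingEnd ℂ) (1 + (starRingEnd ℂ) (x j) * t) = t + x j := by
          rw [map_add, map_one, map_mul, Complex.conj_conj]
          calc t * (1 + x j * (starRingEnd ℂ) t)
              = t + x j * (t * (starRingEnd ℂ) t) := by ring
            _ = t + x j := by rw [ht1, mul_one]
        have key : ‖1 + (starRingEnd ℂ) (x j) * t‖ = ‖t + x j‖ := by
          calc ‖1 + (starRingEnd ℂ) (x j) * t‖
              = ‖t‖ * ‖(starRingEnd ℂ) (1 + (starRingEnd ℂ) (x j) * t)‖ := by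
                rw [Complex.norm_conj, habs, one_mul]
            _ = ‖t * (starRingEnd ℂ) (1 + (starRingEnd ℂ) (x j) * t)‖ :=
                (norm_mul _ _).symm
            _ = ‖t + x j‖ := by rw [hconj]
        have hnum : ‖1 + (starRingEnd ℂ) (x j) * t‖ ≠ 0 := by
          exact norm_ne_zero_iff.2 hd
        show ‖(t + x j) / (1 + (starRingEnd ℂ) (x j) * t)‖ = 1
        rw [norm_div, ← key, div_self hnum]
      have hz1 : ‖G t‖ ≤ 1 := by
        apply (pi_norm_le_iff_of_nonneg zero_le_one).2
        intro j
        rw [hzj j]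
      obtain ⟨i, hi⟩ := hnet (G t) hzj
      have hlip := lip (G t) (w i) hz1 (hw i)
      have hstep : n * Real.exp 1 * S * ‖G t - w i‖ ≤ S / 2 := by
        have h1 : n * Real.exp 1 * S * ‖G t - w i‖ ≤ n * Real.exp 1 * S * δ :=
          mul_le_mul_of_nonneg_left hi (by positivity)
        have h2 : (n:ℝ) * Real.exp 1 * S * δ = S / 2 := by
          rw [hδ]
          field_simp
        linarith
      have : ‖P (G t)‖ ≤ ‖P (w i)‖ + ‖P (G t) - P (w i)‖ := by
        have := norm_add_le (P (w i)) (P (G t) - P (w i))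
        simpa using this
      calc ‖P (G t)‖ ≤ ‖P (w i)‖ + ‖P (G t) - P (w i)‖ := this
        _ ≤ R + S / 2 := add_le_add (hbound i) (hlip.trans hstep)
    have hmm := Complex.norm_le_of_forall_mem_frontier_norm_le isBounded_ball hdc hfront
      (subset_closure (mem_ball_self one_pos))
    have hG0 : G 0 = x := by
      funext j
      simp [hG]
    rw [hG0] at hmm
    exact hmm
  -- S ≤ R + S/2 by homogeneous scaling limit
  have hS2 : S ≤ R + S / 2 := by
    have hmono : ∀ r : ℝ, 0 ≤ r → r < 1 → r ^ n * S ≤ R + S / 2 := by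
      intro r hr0 hr1
      have hnorm : ‖(r : ℂ) • x₀‖ < 1 := by
        rw [norm_smul, Complex.norm_real, Real.norm_eq_abs, abs_of_nonneg hr0]
        calc r * ‖x₀‖ ≤ r * 1 := mul_le_mul_of_nonneg_left hx₀1 hr0
          _ < 1 := by linarith
      have h := halfS _ hnorm
      rw [homog, norm_mul, norm_pow, Complex.norm_real, Real.norm_eq_abs, abs_of_nonneg hr0] at h
      exact h
    have htend : Filter.Tendsto (fun r : ℝ => r ^ n * S) (nhdsWithin 1 (Set.Iio 1)) (nhds S) := by
      have h1 : Filter.Tendsto (fun r : ℝ => r ^ n * S) (nhds 1) (nhds (1 ^ n * S)) :=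
        (((continuous_pow n).mul continuous_const).tendsto 1)
      rw [one_pow, one_mul] at h1
      exact h1.mono_left nhdsWithin_le_nhds
    refine le_of_tendsto htend ?_
    filter_upwards [Ioo_mem_nhdsLT_of_mem (Set.mem_Ioc.2 ⟨zero_lt_one, le_refl (1:ℝ)⟩)] with r hr
    exact hmono r hr.1.le hr.2
  intro x hx
  have := hmax x hx
  linarith
end

section
/- For every n, d ≥ 1 there exist signs a_k^j ∈ {−1, +1} (1 ≤ j ≤ n, 1 ≤ k ≤ d) such that the n-homogeneous polynomial P(z) = ∏_{j=1}^n ∑_{k=1}^d a_k^j z_k on ℓ_∞^d(ℂ) satisfies ‖P‖ ≤ 2·√((24n)^d · d^n), while each linear factor has norm ∑_{k=1}^d |a_k^j| = d. -/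
open Finset

/-- AM-GM: squared product bound. -/
lemma amgm_sq {ι : Type*} (s : Finset ι) (hs : s.Nonempty) (f : ι → ℝ)
    (hf : ∀ i ∈ s, 0 ≤ f i) (M : ℝ) (hM : ∑ i ∈ s, f i ^ 2 ≤ M) :
    (∏ i ∈ s, f i) ^ 2 ≤ (M / s.card) ^ s.card := by
  have hc : 0 < (s.card : ℝ) := by exact_mod_cast Finset.card_pos.2 hs
  have h0 : ∀ i ∈ s, (0:ℝ) ≤ f i ^ 2 := fun i _ => sq_nonneg _
  have key := Real.geom_mean_le_arith_mean_weighted s (fun _ => (s.card : ℝ)⁻¹)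
      (fun i => f i ^ 2) (fun i _ => by positivity)
      (by rw [Finset.sum_const, nsmul_eq_mul]; field_simp) h0
  have h1 : (∏ i ∈ s, f i ^ 2) ^ ((s.card : ℝ)⁻¹) ≤ M / s.card := by
    rw [← Real.finset_prod_rpow s _ h0]
    refine key.trans ?_
    rw [← Finset.mul_sum, div_eq_inv_mul]
    exact mul_le_mul_of_nonneg_left hM (by positivity)
  have h2 : (0:ℝ) ≤ ∏ i ∈ s, f i ^ 2 := Finset.prod_nonneg h0
  have h3 := pow_le_pow_left₀ (by positivity) h1 s.card
  rwa [← Real.rpow_natCast ((∏ i ∈ s, f i ^ 2) ^ ((s.card : ℝ)⁻¹)) s.card,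
    ← Real.rpow_mul h2, inv_mul_cancel₀ (ne_of_gt hc), Real.rpow_one,
    Finset.prod_pow] at h3

lemma ratio_pow_le_exp {N r : ℕ} (hr : 1 ≤ r) (hrN : r ≤ N) :
    ((N : ℝ) / r) ^ r ≤ Real.exp N := by
  have hrp : (0:ℝ) < r := by exact_mod_cast hr
  have hx : (0:ℝ) < (N:ℝ)/r := by
    have : (0:ℝ) < N := by exact_mod_cast hr.trans hrN
    positivity
  have hlog : Real.log ((N:ℝ)/r) ≤ (N:ℝ)/r - 1 := Real.log_le_sub_one_of_pos hx
  have h1 : (r:ℝ) * Real.log ((N:ℝ)/r) ≤ (N:ℝ) - r := by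
    have h := mul_le_mul_of_nonneg_left hlog (le_of_lt hrp)
    have h2 : (r:ℝ) * ((N:ℝ)/r - 1) = (N:ℝ) - r := by field_simp
    linarith
  calc ((N:ℝ)/r)^r = Real.exp (Real.log ((N:ℝ)/r)) ^ r := by rw [Real.exp_log hx]
    _ = Real.exp ((r:ℝ) * Real.log ((N:ℝ)/r)) := by rw [Real.exp_nat_mul]
    _ ≤ Real.exp ((N:ℝ) - r) := Real.exp_le_exp.2 h1
    _ ≤ Real.exp N := Real.exp_le_exp.2 (by linarith)

set_option maxHeartbeats 1000000 in
/-- There exist signs a_k^j ∈ {−1,1} such that the n-homogeneous polynomial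
P(z) = ∏_j ∑_k a_k^j z_k on ℓ_∞^d(ℂ) satisfies ‖P‖ ≤ 2√((24n)^d d^n), while each
linear factor z ↦ ∑_k a_k^j z_k has norm ∑_k |a_k^j| = d. -/
theorem exists_signs_small_product (n d : ℕ) (hn : 1 ≤ n) (hd : 1 ≤ d) :
    ∃ a : Fin n → Fin d → ℝ,
      (∀ j k, a j k = 1 ∨ a j k = -1) ∧
      (∀ j, ∑ k, |a j k| = (d : ℝ)) ∧
      ∀ z : Fin d → ℂ, ‖z‖ ≤ 1 →
        ‖∏ j, ∑ k, (a j k : ℂ) * z k‖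
          ≤ 2 * Real.sqrt ((24 * n : ℝ) ^ d * (d : ℝ) ^ n) := by
  classical
  set t := Nat.clog 2 d with ht
  set N := 2 ^ t with hN
  have hNpos : 0 < N := Nat.pow_pos (by norm_num)
  have hdN : d ≤ N := Nat.le_pow_clog (by norm_num) d
  have hN2d : N ≤ 2 * d := by
    rcases eq_or_lt_of_le hd with h1 | h2
    · have ht0 : t = 0 := by rw [ht, ← h1]; simp
      simp [hN, ht0]; omega
    · have htpos : 0 < t := Nat.clog_pos (by norm_num) h2
      have hlt : 2 ^ (t - 1) < d := by
        have := Nat.pow_pred_clog_lt_self (b := 2) (by norm_num) h2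
        simpa [← ht] using this
      have hform : N = 2 * 2 ^ (t - 1) := by
        rw [hN]
        conv_lhs => rw [show t = (t - 1) + 1 by omega]
        rw [pow_succ']
      omega
  set χ : Bool → Bool → ℝ := fun b c => if b && c then -1 else 1 with hχ
  set w : (Fin t → Bool) → Fin d → ℝ :=
    fun s k => ∏ i, χ (s i) (Nat.testBit (k : ℕ) (i : ℕ)) with hw
  set e : ℕ → (Fin t → Bool) := fun m i => Nat.testBit m (i : ℕ) with he
  have hχpm : ∀ b c, χ b c = 1 ∨ χ b c = -1 := by
    intro b c; cases b <;> cases c <;> norm_num [hχ]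
  have hwpm : ∀ s k, w s k = 1 ∨ w s k = -1 := by
    intro s k
    refine Finset.prod_induction _ (fun x => x = 1 ∨ x = -1) ?_ (Or.inl rfl) ?_
    · rintro x y (rfl | rfl) (rfl | rfl) <;> norm_num
    · intro i _; exact hχpm _ _
  refine ⟨fun j k => w (e (j : ℕ)) k, fun j k => hwpm _ _, ?_, ?_⟩
  · intro j
    have habs : ∀ k : Fin d, |w (e (j : ℕ)) k| = 1 := fun k => by
      rcases hwpm (e (j : ℕ)) k with h | h <;> simp [h]
    simp only [habs]
    simp
  intro z hz
  have hzk : ∀ k, ‖z k‖ ≤ 1 := fun k => by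
    exact (norm_le_pi_norm z k).trans hz
  have hbool : ∀ c c' : Bool, (∑ b : Bool, χ b c * χ b c') = if c = c' then 2 else 0 := by
    intro c c'
    cases c <;> cases c' <;> simp [hχ, Fintype.sum_bool] <;> norm_num
  have horth : ∀ k l : Fin d, (∑ s : Fin t → Bool, w s k * w s l)
      = if k = l then (N : ℝ) else 0 := by
    intro k l
    have expand : (∑ s : Fin t → Bool, w s k * w s l)
        = ∏ i : Fin t, ∑ b : Bool,
            χ b (Nat.testBit (k : ℕ) (i : ℕ)) * χ b (Nat.testBit (l : ℕ) (i : ℕ)) := by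
      rw [Finset.prod_univ_sum, Fintype.piFinset_univ]
      apply Finset.sum_congr rfl
      intro s _
      rw [hw]
      simp only
      rw [← Finset.prod_mul_distrib]
    rcases eq_or_ne k l with rfl | hkl
    · rw [if_pos rfl, expand]
      have h2 : ∀ i : Fin t, (∑ b : Bool,
          χ b (Nat.testBit (k : ℕ) (i : ℕ)) * χ b (Nat.testBit (k : ℕ) (i : ℕ))) = 2 :=
        fun i => by rw [hbool]; simp
      rw [Finset.prod_congr rfl (fun i _ => h2 i), Finset.prod_const]
      simp [hN]
    · rw [if_neg hkl, expand]
      have hkd : (k : ℕ) < N := lt_of_lt_of_le k.2 hdN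
      have hld : (l : ℕ) < N := lt_of_lt_of_le l.2 hdN
      have hex : ∃ i : Fin t, Nat.testBit (k : ℕ) (i : ℕ) ≠ Nat.testBit (l : ℕ) (i : ℕ) := by
        by_contra hcon
        push_neg at hcon
        apply hkl
        apply Fin.ext
        apply Nat.eq_of_testBit_eq
        intro i
        by_cases hi : i < t
        · exact hcon ⟨i, hi⟩
        · rw [Nat.testBit_eq_false_of_lt, Nat.testBit_eq_false_of_lt]
          · exact lt_of_lt_of_le hld (Nat.pow_le_pow_right (by norm_num) (le_of_not_gt hi))
          · exact lt_of_lt_of_le hkd (Nat.pow_le_pow_right (by norm_num) (le_of_not_gt hi))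
      obtain ⟨i, hi⟩ := hex
      apply Finset.prod_eq_zero (Finset.mem_univ i)
      rw [hbool, if_neg hi]
  set L : (Fin t → Bool) → ℂ := fun s => ∑ k, (w s k : ℂ) * z k with hL
  have hkey : ∑ s : Fin t → Bool, Complex.normSq (L s)
      = (N : ℝ) * ∑ k, Complex.normSq (z k) := by
    have hcalc : (∑ s : Fin t → Bool, (Complex.normSq (L s) : ℂ))
        = (N : ℂ) * ∑ k, (Complex.normSq (z k) : ℂ) := by
      calc ∑ s : Fin t → Bool, (Complex.normSq (L s) : ℂ)
          = ∑ s : Fin t → Bool, L s * (starRingEnd ℂ) (L s) := by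
            simp [Complex.mul_conj]
        _ = ∑ s : Fin t → Bool, ∑ k, ∑ l,
              ((w s k * w s l : ℝ) : ℂ) * (z k * (starRingEnd ℂ) (z l)) := by
            apply Finset.sum_congr rfl; intro s _
            rw [hL]
            simp only [map_sum, map_mul, Complex.conj_ofReal]
            rw [Finset.sum_mul_sum]
            apply Finset.sum_congr rfl; intro k _
            apply Finset.sum_congr rfl; intro l _
            push_cast; ring
        _ = ∑ k, ∑ l, ((∑ s : Fin t → Bool, w s k * w s l : ℝ) : ℂ)
              * (z k * (starRingEnd ℂ) (z l)) := by
            rw [Finset.sum_comm]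
            apply Finset.sum_congr rfl; intro k _
            rw [Finset.sum_comm]
            apply Finset.sum_congr rfl; intro l _
            push_cast
            rw [Finset.sum_mul]
        _ = ∑ k, (N : ℂ) * (z k * (starRingEnd ℂ) (z k)) := by
            apply Finset.sum_congr rfl; intro k _
            have hterm : ∀ l : Fin d, ((∑ s : Fin t → Bool, w s k * w s l : ℝ) : ℂ)
                * (z k * (starRingEnd ℂ) (z l))
                = if k = l then (N : ℂ) * (z k * (starRingEnd ℂ) (z l)) else 0 := by
              intro l; rw [horth]; split <;> simp
            rw [Finset.sum_congr rfl (fun l _ => hterm l), Finset.sum_ite_eq]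
            simp
        _ = (N : ℂ) * ∑ k, (Complex.normSq (z k) : ℂ) := by
            rw [← Finset.mul_sum]
            simp [Complex.mul_conj]
    exact_mod_cast hcalc
  have hsum' : ∑ s : Fin t → Bool, ‖L s‖ ^ 2 ≤ (N : ℝ) * d := by
    have h1 : ∑ s : Fin t → Bool, ‖L s‖ ^ 2
        = (N : ℝ) * ∑ k, Complex.normSq (z k) := by
      simp only [Complex.sq_norm]; exact hkey
    rw [h1]
    have h2 : ∑ k, Complex.normSq (z k) ≤ (d : ℝ) := by
      calc ∑ k, Complex.normSq (z k) ≤ ∑ _k : Fin d, (1:ℝ) := by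
            apply Finset.sum_le_sum
            intro k _
            rw [← Complex.sq_norm]
            nlinarith [hzk k, norm_nonneg (z k)]
        _ = d := by simp
    have hN0 : (0:ℝ) ≤ N := by positivity
    exact mul_le_mul_of_nonneg_left h2 hN0
  have hinj : ∀ m1 ∈ Finset.range N, ∀ m2 ∈ Finset.range N, e m1 = e m2 → m1 = m2 := by
    intro m1 h1 m2 h2 hee
    rw [Finset.mem_range] at h1 h2
    apply Nat.eq_of_testBit_eq
    intro i
    by_cases hi : i < t
    · exact congrFun hee ⟨i, hi⟩
    · rw [Nat.testBit_eq_false_of_lt, Nat.testBit_eq_false_of_lt]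
      · exact lt_of_lt_of_le h2 (Nat.pow_le_pow_right (by norm_num) (le_of_not_gt hi))
      · exact lt_of_lt_of_le h1 (Nat.pow_le_pow_right (by norm_num) (le_of_not_gt hi))
  have himg : Finset.image e (Finset.range N) = Finset.univ := by
    apply Finset.eq_univ_of_card
    rw [Finset.card_image_of_injOn (fun a ha b hb hab =>
      hinj a (by simpa using ha) b (by simpa using hb) hab), Finset.card_range]
    simp [hN]
  have hprodconv : ∀ g : (Fin t → Bool) → ℝ,
      ∏ s : Fin t → Bool, g s = ∏ m ∈ Finset.range N, g (e m) := by
    intro g; rw [← himg, Finset.prod_image hinj]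
  have hsumconv : ∀ g : (Fin t → Bool) → ℝ,
      ∑ s : Fin t → Bool, g s = ∑ m ∈ Finset.range N, g (e m) := by
    intro g; rw [← himg, Finset.sum_image hinj]
  set P : ℕ → ℝ := fun m => ‖L (e m)‖ with hP
  have hPnn : ∀ m, 0 ≤ P m := fun m => norm_nonneg _
  have hper : ∀ m, e m = e (m % N) := by
    intro m; funext i
    simp only [he, hN]
    rw [Nat.testBit_mod_two_pow]
    simp [i.2]
  have hgroup : ∀ Q : ℕ, ∏ m ∈ Finset.range (N * Q), P m
      = (∏ m ∈ Finset.range N, P m) ^ Q := by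
    intro Q
    induction Q with
    | zero => simp
    | succ Q ih =>
      rw [Nat.mul_succ, Finset.prod_range_add, ih, pow_succ]
      congr 1
      apply Finset.prod_congr rfl
      intro i hi
      rw [Finset.mem_range] at hi
      simp only [hP]
      congr 1
      rw [hper (N * Q + i), Nat.mul_add_mod, Nat.mod_eq_of_lt hi]
  set q := n / N with hq
  set r := n % N with hr
  have hnqr : N * q + r = n := Nat.div_add_mod n N
  have hrN : r < N := Nat.mod_lt n hNpos
  have hsplit : ∏ m ∈ Finset.range n, P m
      = (∏ m ∈ Finset.range N, P m) ^ q * ∏ m ∈ Finset.range r, P m := by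
    rw [← hnqr, Finset.prod_range_add, hgroup]
    congr 1
    apply Finset.prod_congr rfl
    intro i hi
    rw [Finset.mem_range] at hi
    simp only [hP]
    congr 1
    rw [hper (N * q + i), Nat.mul_add_mod, Nat.mod_eq_of_lt (hi.trans hrN)]
  have hsumN : ∑ m ∈ Finset.range N, P m ^ 2 ≤ (N : ℝ) * d := by
    have := hsumconv (fun s => ‖L s‖ ^ 2)
    simp only [hP]
    rw [← this]
    exact hsum'
  set A := ∏ m ∈ Finset.range N, P m with hA
  set B := ∏ m ∈ Finset.range r, P m with hB
  have hA0 : 0 ≤ A := Finset.prod_nonneg (fun m _ => hPnn m)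
  have hB0 : 0 ≤ B := Finset.prod_nonneg (fun m _ => hPnn m)
  have hAbound : A ^ 2 ≤ (d : ℝ) ^ N := by
    have h := amgm_sq (Finset.range N) (Finset.nonempty_range_iff.2 (by omega))
      P (fun m _ => hPnn m) ((N : ℝ) * d) hsumN
    rw [Finset.card_range] at h
    have hNd : ((N : ℝ) * d / N) = d := by
      field_simp
    rwa [hNd] at h
  have hd1 : (1:ℝ) ≤ (d:ℝ) := by exact_mod_cast hd
  have hn1 : (1:ℝ) ≤ (n:ℝ) := by exact_mod_cast hn
  have h24n : (1:ℝ) ≤ (24 * n : ℝ) := by nlinarith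
  have hsq : (A ^ q * B) ^ 2 ≤ (24 * (n:ℝ)) ^ d * (d : ℝ) ^ n := by
    have h1 : (A ^ q * B) ^ 2 = (A ^ 2) ^ q * B ^ 2 := by ring
    rcases Nat.eq_zero_or_pos r with hrz | hrpos
    · have hB1 : B = 1 := by rw [hB, hrz]; simp
      have hnq : N * q = n := by omega
      calc (A ^ q * B) ^ 2 = (A ^ 2) ^ q := by rw [h1, hB1]; ring
        _ ≤ ((d : ℝ) ^ N) ^ q := pow_le_pow_left₀ (sq_nonneg A) hAbound q
        _ = (d : ℝ) ^ n := by rw [← pow_mul, hnq]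
        _ ≤ (24 * (n:ℝ)) ^ d * (d : ℝ) ^ n := by
            have h1d : (1:ℝ) ≤ (24 * (n:ℝ)) ^ d := by
              calc (1:ℝ) = 1 ^ d := (one_pow d).symm
                _ ≤ (24 * (n:ℝ)) ^ d := pow_le_pow_left₀ zero_le_one h24n d
            nlinarith [pow_nonneg (le_trans zero_le_one hd1) n]
    · have hsumr : ∑ m ∈ Finset.range r, P m ^ 2 ≤ (N : ℝ) * d := by
        refine le_trans ?_ hsumN
        exact Finset.sum_le_sum_of_subset_of_nonneg
          (Finset.range_subset_range.2 (le_of_lt hrN)) (fun m _ _ => sq_nonneg _)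
      have hBbound : B ^ 2 ≤ ((N : ℝ) * d / r) ^ r := by
        have h := amgm_sq (Finset.range r) (Finset.nonempty_range_iff.2 (by omega))
          P (fun m _ => hPnn m) ((N : ℝ) * d) hsumr
        rwa [Finset.card_range] at h
      have hrp : (0:ℝ) < r := by exact_mod_cast hrpos
      have hsplit2 : ((N : ℝ) * d / r) ^ r = ((N:ℝ)/r) ^ r * (d:ℝ) ^ r := by
        rw [← mul_pow]
        congr 1
        field_simp
      have hratio : ((N:ℝ)/r) ^ r ≤ (24 * (n:ℝ)) ^ d := by
        calc ((N:ℝ)/r) ^ r ≤ Real.exp N := ratio_pow_le_exp hrpos (le_of_lt hrN)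
          _ ≤ Real.exp ((d:ℝ) * 2) := by
              apply Real.exp_le_exp.2
              have : (N:ℝ) ≤ 2 * d := by exact_mod_cast hN2d
              linarith
          _ = Real.exp 2 ^ d := Real.exp_nat_mul 2 d
          _ ≤ (24:ℝ) ^ d := by
              apply pow_le_pow_left₀ (Real.exp_nonneg 2)
              have h2 : Real.exp 2 = Real.exp 1 * Real.exp 1 := by
                rw [← Real.exp_add]; norm_num
              nlinarith [Real.exp_one_lt_d9, Real.exp_pos 1]
          _ ≤ (24 * (n:ℝ)) ^ d := by
              apply pow_le_pow_left₀ (by norm_num)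
              nlinarith
      calc (A ^ q * B) ^ 2 = (A ^ 2) ^ q * B ^ 2 := h1
        _ ≤ ((d : ℝ) ^ N) ^ q * (((N:ℝ)/r) ^ r * (d:ℝ) ^ r) := by
            apply mul_le_mul (pow_le_pow_left₀ (sq_nonneg A) hAbound q)
              (hBbound.trans (le_of_eq hsplit2)) (sq_nonneg B)
              (pow_nonneg (pow_nonneg (le_trans zero_le_one hd1) N) q)
        _ = ((N:ℝ)/r) ^ r * (d:ℝ) ^ n := by
            rw [← pow_mul, ← hnqr, pow_add]
            ring
        _ ≤ (24 * (n:ℝ)) ^ d * (d : ℝ) ^ n := by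
            apply mul_le_mul_of_nonneg_right hratio
              (pow_nonneg (le_trans zero_le_one hd1) n)
  have hTeq : ‖∏ j : Fin n, ∑ k, ((w (e (j : ℕ)) k : ℝ) : ℂ) * z k‖
      = A ^ q * B := by
    rw [norm_prod, ← hsplit]
    exact Fin.prod_univ_eq_prod_range (fun m => P m) n
  simp only
  rw [hTeq]
  have hnn : 0 ≤ A ^ q * B := mul_nonneg (pow_nonneg hA0 q) hB0
  have hs0 : (0:ℝ) ≤ (24 * (n:ℝ)) ^ d * (d : ℝ) ^ n := by positivity
  calc A ^ q * B = Real.sqrt ((A ^ q * B) ^ 2) := (Real.sqrt_sq hnn).symm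
    _ ≤ Real.sqrt ((24 * (n:ℝ)) ^ d * (d : ℝ) ^ n) := Real.sqrt_le_sqrt hsq
    _ ≤ 2 * Real.sqrt ((24 * (n:ℝ)) ^ d * (d : ℝ) ^ n) :=
        le_mul_of_one_le_left (Real.sqrt_nonneg _) one_le_two
end

section
/- The n-th linear polarization constant of ℓ_∞^d(ℂ) satisfies c_n(ℓ_∞^d(ℂ)) ≥ (1/2)·√(d^n/(24n)^d). -/
open Finset

namespace PolarAux

lemma sum_pi_prod {ι : Type*} [Fintype ι] [DecidableEq ι] {β : Type*} [Fintype β]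
    {R : Type*} [CommSemiring R] (F : ι → β → R) :
    ∑ ε : ι → β, ∏ i, F i (ε i) = ∏ i, ∑ b, F i b := by
  rw [Finset.prod_univ_sum, Fintype.piFinset_univ]

variable {n d : ℕ}

def sg (b : Bool) : ℝ := if b then 1 else -1

lemma sg_mul_self (b : Bool) : sg b * sg b = 1 := by cases b <;> simp [sg]

lemma abs_sg (b : Bool) : |sg b| = 1 := by cases b <;> simp [sg]

def wgt (ε : Fin n → Fin d → Bool) (f : Fin n → Fin d) : ℝ := ∏ j, sg (ε j (f j))

def cnt (f : Fin n → Fin d) : Fin d → ℕ := fun k => #(univ.filter fun j => f j = k)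

def idxSet (n d : ℕ) : Finset (Fin d → ℕ) := univ.image (cnt (n := n))

def coeffs (ε : Fin n → Fin d → Bool) (α : Fin d → ℕ) : ℝ :=
  ∑ f ∈ univ.filter (fun f => cnt f = α), wgt ε f

lemma sum_row_sg (a b : Fin d) :
    ∑ row : Fin d → Bool, sg (row a) * sg (row b)
      = if a = b then (2:ℝ)^d else 0 := by
  have key : ∀ row : Fin d → Bool, sg (row a) * sg (row b)
      = ∏ k, ((if k = a then sg (row k) else 1) * (if k = b then sg (row k) else 1)) := by
    intro row
    rw [prod_mul_distrib, Finset.prod_ite_eq' univ a (fun k => sg (row k)),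
      Finset.prod_ite_eq' univ b (fun k => sg (row k))]
    simp
  simp_rw [key]
  rw [sum_pi_prod (fun k t => (if k = a then sg t else 1) * (if k = b then sg t else 1))]
  by_cases hab : a = b
  · subst hab
    rw [if_pos rfl]
    have : ∀ k : Fin d, (∑ t : Bool, (if k = a then sg t else 1) * (if k = a then sg t else 1)) = 2 := by
      intro k
      by_cases h : k = a <;> simp [h, sg_mul_self, Fintype.sum_bool, sg]
      norm_num
    rw [Finset.prod_congr rfl (fun k _ => this k), prod_const, card_univ, Fintype.card_fin]
  · rw [if_neg hab]
    apply Finset.prod_eq_zero (Finset.mem_univ a)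
    simp [sg, hab]

lemma sum_wgt_mul_wgt (f g : Fin n → Fin d) :
    ∑ ε : Fin n → Fin d → Bool, wgt ε f * wgt ε g
      = if f = g then ((2:ℝ)^d)^n else 0 := by
  have key : ∀ ε : Fin n → Fin d → Bool, wgt ε f * wgt ε g
      = ∏ j, (sg (ε j (f j)) * sg (ε j (g j))) := fun ε => (prod_mul_distrib).symm
  simp_rw [key]
  have step : ∑ ε : Fin n → Fin d → Bool, ∏ j, (sg (ε j (f j)) * sg (ε j (g j)))
      = ∏ j, ∑ row : Fin d → Bool, sg (row (f j)) * sg (row (g j)) :=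
    sum_pi_prod (fun j (row : Fin d → Bool) => sg (row (f j)) * sg (row (g j)))
  rw [step]
  simp_rw [sum_row_sg]
  by_cases hfg : f = g
  · subst hfg
    simp
  · rw [if_neg hfg]
    obtain ⟨j, hj⟩ := Function.ne_iff.mp hfg
    exact Finset.prod_eq_zero (Finset.mem_univ j) (by rw [if_neg hj])


lemma total_sum :
    ∑ ε : Fin n → Fin d → Bool, ∑ α ∈ idxSet n d, (coeffs ε α)^2
      = ((2:ℝ)^d)^n * (d:ℝ)^n := by
  rw [Finset.sum_comm]
  have inner : ∀ α ∈ idxSet n d,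
      ∑ ε : Fin n → Fin d → Bool, (coeffs ε α)^2
        = #(univ.filter (fun f : Fin n → Fin d => cnt f = α)) * ((2:ℝ)^d)^n := by
    intro α _
    have expand : ∀ ε : Fin n → Fin d → Bool, (coeffs ε α)^2
        = ∑ f ∈ univ.filter (fun f => cnt f = α), ∑ g ∈ univ.filter (fun f => cnt f = α),
            wgt ε f * wgt ε g := by
      intro ε
      rw [sq, coeffs, Finset.sum_mul_sum]
    simp_rw [expand]
    rw [Finset.sum_comm]
    have : ∀ f ∈ univ.filter (fun f : Fin n → Fin d => cnt f = α),
        (∑ ε : Fin n → Fin d → Bool, ∑ g ∈ univ.filter (fun f => cnt f = α), wgt ε f * wgt ε g)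
        = ((2:ℝ)^d)^n := by
      intro f hf
      rw [Finset.sum_comm]
      have : ∀ g ∈ univ.filter (fun f : Fin n → Fin d => cnt f = α),
          (∑ ε : Fin n → Fin d → Bool, wgt ε f * wgt ε g) = if g = f then ((2:ℝ)^d)^n else 0 := by
        intro g _
        rw [sum_wgt_mul_wgt]
        by_cases h : g = f
        · subst h; simp
        · rw [if_neg h, if_neg (Ne.symm h)]
      rw [Finset.sum_congr rfl this, Finset.sum_ite_eq' _ f _, if_pos hf]
    rw [Finset.sum_congr rfl this, Finset.sum_const, nsmul_eq_mul]
  rw [Finset.sum_congr rfl inner, ← Finset.sum_mul, ← Nat.cast_sum]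
  have hfib : ∑ x ∈ idxSet n d, #(filter (fun f : Fin n → Fin d => cnt f = x) univ)
      = d ^ n := by
    rw [idxSet, ← Finset.card_eq_sum_card_fiberwise
      (fun f _ => Finset.mem_image_of_mem cnt (mem_univ f))]
    simp [Fintype.card_fun]
  rw [hfib]
  push_cast
  ring

lemma exists_good_eps (hn : 1 ≤ n) (hd : 1 ≤ d) :
    ∃ ε : Fin n → Fin d → Bool, ∑ α ∈ idxSet n d, (coeffs ε α)^2 ≤ (d:ℝ)^n := by
  by_contra h
  push_neg at h
  have : ∑ ε : Fin n → Fin d → Bool, (d:ℝ)^n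
      < ∑ ε : Fin n → Fin d → Bool, ∑ α ∈ idxSet n d, (coeffs ε α)^2 :=
    Finset.sum_lt_sum_of_nonempty univ_nonempty (fun ε _ => h ε)
  rw [total_sum, Finset.sum_const, nsmul_eq_mul] at this
  have hcard : (Fintype.card (Fin n → Fin d → Bool) : ℝ) = ((2:ℝ)^d)^n := by
    rw [Fintype.card_fun, Fintype.card_fun]
    push_cast
    simp
  rw [card_univ, hcard] at this
  exact lt_irrefl _ this

lemma card_idxSet : #(idxSet n d) ≤ (n+1)^d := by
  have h : ∀ α ∈ idxSet n d, ∀ k, α k < n + 1 := by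
    intro α hα k
    obtain ⟨f, _, rfl⟩ := Finset.mem_image.mp hα
    exact Nat.lt_succ_of_le ((Finset.card_filter_le _ _).trans (by simp))
  calc #(idxSet n d) ≤ #(univ : Finset (Fin d → Fin (n+1))) := by
        apply Finset.card_le_card_of_injOn (fun α k => ⟨min (α k) n, by omega⟩)
          (fun _ _ => mem_univ _)
        intro α hα β hβ hfun
        funext k
        have hα' := h α hα k
        have hβ' := h β hβ k
        have := congrFun hfun k
        simp only [Fin.mk.injEq] at this
        omega
    _ = (n+1)^d := by simp [Fintype.card_fun]


/-- The sign functionals on ℓ_∞^d(ℂ). -/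
noncomputable def psi (ε : Fin n → Fin d → Bool) (j : Fin n) : (Fin d → ℂ) →L[ℂ] ℂ :=
  ∑ k, ((sg (ε j k) : ℂ)) • ContinuousLinearMap.proj k

lemma psi_apply (ε : Fin n → Fin d → Bool) (j : Fin n) (x : Fin d → ℂ) :
    psi ε j x = ∑ k, (sg (ε j k) : ℂ) * x k := by
  simp [psi, ContinuousLinearMap.sum_apply]

lemma prod_pow_cnt (f : Fin n → Fin d) (x : Fin d → ℂ) :
    ∏ j, x (f j) = ∏ k, x k ^ cnt f k := by
  rw [Finset.prod_comp x f]
  apply Finset.prod_subset (Finset.subset_univ _)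
  intro k _ hk
  have : cnt f k = 0 := by
    rw [cnt, Finset.card_eq_zero, Finset.filter_eq_empty_iff]
    intro j _ h
    exact hk (h ▸ Finset.mem_image_of_mem f (mem_univ j))
  rw [show #(filter (fun a => f a = k) univ) = cnt f k from rfl, this, pow_zero]

lemma expansion (ε : Fin n → Fin d → Bool) (x : Fin d → ℂ) :
    ∏ j, psi ε j x = ∑ α ∈ idxSet n d, (coeffs ε α : ℂ) * ∏ k, x k ^ α k := by
  simp_rw [psi_apply]
  rw [Finset.prod_univ_sum, Fintype.piFinset_univ]
  have step1 : ∀ f : Fin n → Fin d,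
      (∏ j, (sg (ε j (f j)) : ℂ) * x (f j)) = (wgt ε f : ℂ) * ∏ k, x k ^ cnt f k := by
    intro f
    rw [prod_mul_distrib, wgt, prod_pow_cnt]
    push_cast
    ring
  rw [Finset.sum_congr rfl (fun f _ => step1 f)]
  rw [← Finset.sum_fiberwise_of_maps_to
    (fun f (_ : f ∈ univ) => Finset.mem_image_of_mem cnt (mem_univ f))
    (fun f => (wgt ε f : ℂ) * ∏ k, x k ^ cnt f k)]
  apply Finset.sum_congr rfl
  intro α hα
  have : ∀ f ∈ univ.filter (fun f : Fin n → Fin d => cnt f = α),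
      (wgt ε f : ℂ) * ∏ k, x k ^ cnt f k = (wgt ε f : ℂ) * ∏ k, x k ^ α k := by
    intro f hf
    rw [(Finset.mem_filter.mp hf).2]
  rw [Finset.sum_congr rfl this, ← Finset.sum_mul, coeffs]
  push_cast
  ring


lemma norm_prod_psi_le (ε : Fin n → Fin d → Bool)
    (hgood : ∑ α ∈ idxSet n d, (coeffs ε α)^2 ≤ (d:ℝ)^n)
    (x : Fin d → ℂ) (hx : ‖x‖ ≤ 1) :
    ‖∏ j, psi ε j x‖ ≤ Real.sqrt (((n:ℝ)+1)^d * (d:ℝ)^n) := by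
  rw [expansion]
  calc ‖∑ α ∈ idxSet n d, (coeffs ε α : ℂ) * ∏ k, x k ^ α k‖
      ≤ ∑ α ∈ idxSet n d, ‖(coeffs ε α : ℂ) * ∏ k, x k ^ α k‖ := norm_sum_le _ _
    _ ≤ ∑ α ∈ idxSet n d, |coeffs ε α| := by
        apply Finset.sum_le_sum
        intro α _
        rw [norm_mul, Complex.norm_real]
        have h1 : ‖∏ k, x k ^ α k‖ ≤ 1 := by
          rw [norm_prod]
          apply Finset.prod_le_one (fun k _ => norm_nonneg _)
          intro k _
          rw [norm_pow]
          exact pow_le_one₀ (norm_nonneg _) ((norm_le_pi_norm x k).trans hx)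
        calc ‖(coeffs ε α : ℝ)‖ * ‖∏ k, x k ^ α k‖ ≤ ‖(coeffs ε α : ℝ)‖ * 1 :=
              mul_le_mul_of_nonneg_left h1 (norm_nonneg _)
          _ = |coeffs ε α| := by rw [mul_one, Real.norm_eq_abs]
    _ ≤ Real.sqrt (((n:ℝ)+1)^d * (d:ℝ)^n) := by
        rw [Real.le_sqrt (Finset.sum_nonneg fun α _ => abs_nonneg _)
          (by positivity)]
        calc (∑ α ∈ idxSet n d, |coeffs ε α|)^2
            ≤ #(idxSet n d) * ∑ α ∈ idxSet n d, |coeffs ε α|^2 :=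
              sq_sum_le_card_mul_sum_sq
          _ ≤ ((n:ℝ)+1)^d * (d:ℝ)^n := by
              apply mul_le_mul _ _ (Finset.sum_nonneg fun α _ => by positivity) (by positivity)
              · have h := card_idxSet (n := n) (d := d)
                have h2 : (#(idxSet n d) : ℝ) ≤ (((n+1)^d : ℕ) : ℝ) := by exact_mod_cast h
                refine h2.trans (le_of_eq ?_)
                push_cast
                ring
              · simp_rw [sq_abs]
                exact hgood

lemma norm_psi_ge (hd : 1 ≤ d) (ε : Fin n → Fin d → Bool) (j : Fin n) :
    (d:ℝ) ≤ ‖psi ε j‖ := by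
  set x0 : Fin d → ℂ := fun k => (sg (ε j k) : ℂ) with hx0
  have hx0norm : ‖x0‖ ≤ 1 := by
    apply pi_norm_le_iff_of_nonneg zero_le_one |>.mpr
    intro k
    rw [hx0]
    simp [Complex.norm_real, abs_sg]
  have happ : psi ε j x0 = (d : ℂ) := by
    rw [psi_apply]
    have : ∀ k : Fin d, (sg (ε j k) : ℂ) * x0 k = 1 := by
      intro k
      rw [hx0]
      push_cast [← Complex.ofReal_mul, sg_mul_self]
      norm_num
    rw [Finset.sum_congr rfl (fun k _ => this k)]
    simp
  have : (d:ℝ) = ‖psi ε j x0‖ := by rw [happ]; simp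
  rw [this]
  calc ‖psi ε j x0‖ ≤ ‖psi ε j‖ * ‖x0‖ := ContinuousLinearMap.le_opNorm _ _
    _ ≤ ‖psi ε j‖ := mul_le_of_le_one_right (norm_nonneg _) hx0norm


variable {𝕜 X : Type*} [RCLike 𝕜] [NormedAddCommGroup X] [NormedSpace 𝕜 X] {n : ℕ}

lemma prodSupNorm_nonneg (ψ : Fin n → (X →L[𝕜] 𝕜)) : 0 ≤ prodSupNorm ψ :=
  Real.sSup_nonneg fun r ⟨x, _, hr⟩ => hr ▸ norm_nonneg _

lemma bddAbove_set (ψ : Fin n → (X →L[𝕜] 𝕜)) :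
    BddAbove {r : ℝ | ∃ x : X, ‖x‖ ≤ 1 ∧ r = ‖∏ j, ψ j x‖} := by
  refine ⟨∏ j, ‖ψ j‖, fun r ⟨x, hx, hr⟩ => ?_⟩
  rw [hr, norm_prod]
  apply Finset.prod_le_prod (fun j _ => norm_nonneg _)
  intro j _
  calc ‖ψ j x‖ ≤ ‖ψ j‖ * ‖x‖ := ContinuousLinearMap.le_opNorm _ _
    _ ≤ ‖ψ j‖ := mul_le_of_le_one_right (norm_nonneg _) hx

lemma le_prodSupNorm (ψ : Fin n → (X →L[𝕜] 𝕜)) {x : X} (hx : ‖x‖ ≤ 1) :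
    ‖∏ j, ψ j x‖ ≤ prodSupNorm ψ :=
  le_csSup (bddAbove_set ψ) ⟨x, hx, rfl⟩

lemma prodSupNorm_le (ψ : Fin n → (X →L[𝕜] 𝕜)) {B : ℝ} (hB : 0 ≤ B)
    (h : ∀ x : X, ‖x‖ ≤ 1 → ‖∏ j, ψ j x‖ ≤ B) : prodSupNorm ψ ≤ B :=
  Real.sSup_le (fun r ⟨x, hx, hr⟩ => hr ▸ h x hx) hB

/-- product difference bound for scalars of norm ≤ 1 -/
lemma norm_prod_sub_prod_le {s : Finset (Fin n)} (a b : Fin n → 𝕜)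
    (ha : ∀ j, ‖a j‖ ≤ 1) (hb : ∀ j, ‖b j‖ ≤ 1) :
    ‖∏ j ∈ s, a j - ∏ j ∈ s, b j‖ ≤ ∑ j ∈ s, ‖a j - b j‖ := by
  classical
  induction s using Finset.induction with
  | empty => simp
  | insert i s hi ih =>
    rw [Finset.prod_insert hi, Finset.prod_insert hi, Finset.sum_insert hi]
    have key : a i * ∏ j ∈ s, a j - b i * ∏ j ∈ s, b j
        = a i * (∏ j ∈ s, a j - ∏ j ∈ s, b j) + (a i - b i) * ∏ j ∈ s, b j := by ring
    rw [key]
    calc ‖a i * (∏ j ∈ s, a j - ∏ j ∈ s, b j) + (a i - b i) * ∏ j ∈ s, b j‖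
        ≤ ‖a i * (∏ j ∈ s, a j - ∏ j ∈ s, b j)‖ + ‖(a i - b i) * ∏ j ∈ s, b j‖ :=
          norm_add_le _ _
      _ ≤ ‖∏ j ∈ s, a j - ∏ j ∈ s, b j‖ + ‖a i - b i‖ := by
          gcongr
          · rw [norm_mul]
            exact mul_le_of_le_one_left (norm_nonneg _) (ha i)
          · rw [norm_mul]
            apply mul_le_of_le_one_right (norm_nonneg _)
            rw [norm_prod]
            exact Finset.prod_le_one (fun j _ => norm_nonneg _) (fun j _ => hb j)
      _ ≤ (∑ j ∈ s, ‖a j - b j‖) + ‖a i - b i‖ := add_le_add_left ih _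
      _ = ‖a i - b i‖ + ∑ j ∈ s, ‖a j - b j‖ := by ring

lemma prodSupNorm_lipschitz {g h : Fin n → (X →L[𝕜] 𝕜)}
    (hg : ∀ j, ‖g j‖ ≤ 1) (hh : ∀ j, ‖h j‖ ≤ 1) :
    prodSupNorm g ≤ prodSupNorm h + ∑ j, ‖g j - h j‖ := by
  apply prodSupNorm_le
  · exact add_nonneg (prodSupNorm_nonneg h) (Finset.sum_nonneg fun j _ => norm_nonneg _)
  intro x hx
  have key : ‖∏ j, g j x - ∏ j, h j x‖ ≤ ∑ j, ‖g j - h j‖ := by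
    have := norm_prod_sub_prod_le (s := univ) (fun j => g j x) (fun j => h j x)
      (fun j => by
        calc ‖g j x‖ ≤ ‖g j‖ * ‖x‖ := ContinuousLinearMap.le_opNorm _ _
          _ ≤ 1 * 1 := mul_le_mul (hg j) hx (norm_nonneg _) zero_le_one
          _ = 1 := one_mul 1)
      (fun j => by
        calc ‖h j x‖ ≤ ‖h j‖ * ‖x‖ := ContinuousLinearMap.le_opNorm _ _
          _ ≤ 1 * 1 := mul_le_mul (hh j) hx (norm_nonneg _) zero_le_one
          _ = 1 := one_mul 1)
    refine this.trans (Finset.sum_le_sum fun j _ => ?_)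
    calc ‖g j x - h j x‖ = ‖(g j - h j) x‖ := by simp
      _ ≤ ‖g j - h j‖ * ‖x‖ := ContinuousLinearMap.le_opNorm _ _
      _ ≤ ‖g j - h j‖ := mul_le_of_le_one_right (norm_nonneg _) hx
  calc ‖∏ j, g j x‖ ≤ ‖∏ j, h j x‖ + ‖∏ j, g j x - ∏ j, h j x‖ := by
        calc ‖∏ j, g j x‖ = ‖∏ j, h j x + (∏ j, g j x - ∏ j, h j x)‖ := by
              congr 1
              ring
          _ ≤ _ := norm_add_le _ _
    _ ≤ prodSupNorm h + ∑ j, ‖g j - h j‖ := add_le_add (le_prodSupNorm h hx) key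


variable {n d : ℕ}

abbrev Xd (d : ℕ) := Fin d → ℂ
abbrev Dual (d : ℕ) := (Xd d) →L[ℂ] ℂ

noncomputable instance : ProperSpace (Dual d) := FiniteDimensional.proper ℂ _

lemma continuousOn_psn :
    ContinuousOn (fun g : Fin n → Dual d => prodSupNorm g)
      {g : Fin n → Dual d | ∀ j, ‖g j‖ ≤ 1} := by
  have hsum : ∀ (g h : Fin n → Dual d), ∑ j, ‖g j - h j‖ ≤ n * dist g h := by
    intro g h
    calc ∑ j, ‖g j - h j‖ ≤ ∑ _j : Fin n, dist g h := Finset.sum_le_sum (fun j _ => by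
          rw [← dist_eq_norm]; exact dist_le_pi_dist g h j)
      _ = n * dist g h := by rw [Finset.sum_const, card_univ, Fintype.card_fin, nsmul_eq_mul]
  apply LipschitzOnWith.continuousOn (K := n)
  apply LipschitzOnWith.of_dist_le_mul
  intro g hg h hh
  rw [Real.dist_eq, abs_sub_le_iff]
  have hdc : dist h g = dist g h := dist_comm h g
  constructor
  · have h1 := prodSupNorm_lipschitz hg hh
    have h2 := hsum g h
    push_cast
    linarith
  · have h1 := prodSupNorm_lipschitz hh hg
    have h2 := hsum h g
    rw [hdc] at h2
    push_cast
    linarith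


lemma sphere_compact :
    IsCompact {g : Fin n → Dual d | ∀ j, ‖g j‖ = 1} := by
  have : {g : Fin n → Dual d | ∀ j, ‖g j‖ = 1}
      = Set.pi Set.univ (fun _ : Fin n => Metric.sphere (0 : Dual d) 1) := by
    ext g
    simp [Set.mem_pi, mem_sphere_zero_iff_norm]
  rw [this]
  exact isCompact_univ_pi (fun _ => isCompact_sphere 0 1)

lemma sphere_nonempty (hd : 1 ≤ d) :
    ∃ g : Fin n → Dual d, ∀ j, ‖g j‖ = 1 := by
  haveI : NeZero d := ⟨by omega⟩
  set p : Dual d := ContinuousLinearMap.proj (0 : Fin d) with hp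
  have hnorm : ‖p‖ = 1 := by
    apply le_antisymm
    · apply ContinuousLinearMap.opNorm_le_bound _ zero_le_one
      intro x
      rw [one_mul]
      exact norm_le_pi_norm x 0
    · have h1 : ‖(fun _ => (1:ℂ) : Xd d)‖ = 1 := by
        rw [pi_norm_const (1:ℂ)]
        simp
      have := ContinuousLinearMap.le_opNorm p (fun _ => (1:ℂ))
      rw [h1, mul_one] at this
      simpa [hp] using this
  exact ⟨fun _ => p, fun _ => hnorm⟩

lemma min_pos (hn : 1 ≤ n) {g : Fin n → Dual d} (hg : ∀ j, ‖g j‖ = 1) :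
    0 < prodSupNorm g := by
  have hker : ∃ x : Xd d, ∀ j, g j x ≠ 0 := by
    by_contra hcon
    push_neg at hcon
    have hcover : ⋃ j, ((LinearMap.ker (g j : Xd d →ₗ[ℂ] ℂ)) : Set (Xd d)) = Set.univ := by
      apply Set.eq_univ_of_forall
      intro x
      obtain ⟨j, hj⟩ := hcon x
      exact Set.mem_iUnion.mpr ⟨j, hj⟩
    obtain ⟨j, hj⟩ := Subspace.exists_eq_top_of_iUnion_eq_univ hcover
    have : (g j : Xd d →ₗ[ℂ] ℂ) = 0 := LinearMap.ker_eq_top.mp hj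
    have hzero : g j = 0 := by
      ext x
      exact congrFun (congrArg DFunLike.coe this) x
    have h1 := hg j
    rw [hzero] at h1
    simp at h1
  obtain ⟨x, hx⟩ := hker
  have hxne : x ≠ 0 := by
    intro h
    exact hx ⟨0, hn⟩ (by simp [h])
  set y : Xd d := ((‖x‖⁻¹ : ℝ) : ℂ) • x with hy
  have hynorm : ‖y‖ ≤ 1 := by
    rw [hy, norm_smul, Complex.norm_real, norm_inv, norm_norm]
    rw [inv_mul_cancel₀ (norm_ne_zero_iff.mpr hxne)]
  have hyval : ∀ j, g j y ≠ 0 := by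
    intro j
    rw [hy, map_smul]
    apply smul_ne_zero _ (hx j)
    simp [Complex.ofReal_eq_zero, norm_eq_zero, hxne]
  have hprod : ∏ j, g j y ≠ 0 := Finset.prod_ne_zero_iff.mpr (fun j _ => hyval j)
  calc (0:ℝ) < ‖∏ j, g j y‖ := norm_pos_iff.mpr hprod
    _ ≤ prodSupNorm g := le_prodSupNorm g hynorm


lemma exists_const (hn : 1 ≤ n) (hd : 1 ≤ d) :
    ∃ c : ℝ, 0 ≤ c ∧ ∀ ψ : Fin n → Dual d, (∏ j, ‖ψ j‖) ≤ c * prodSupNorm ψ := by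
  obtain ⟨g1, hg1⟩ := sphere_nonempty (n := n) hd
  obtain ⟨g₀, hg₀S, hmin⟩ := sphere_compact.exists_isMinOn ⟨g1, hg1⟩
    (continuousOn_psn.mono (fun g hgS j => le_of_eq (hgS j)))
  set m := prodSupNorm g₀ with hm
  have hmpos : 0 < m := min_pos hn hg₀S
  refine ⟨m⁻¹, inv_nonneg.mpr hmpos.le, ?_⟩
  intro ψ
  by_cases hψ : ∀ j, ψ j ≠ 0
  · set t : Fin n → ℝ := fun j => ‖ψ j‖ with htdef
    have ht : ∀ j, 0 < t j := fun j => norm_pos_iff.mpr (hψ j)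
    have htprod : 0 < ∏ j, t j := Finset.prod_pos (fun j _ => ht j)
    set g : Fin n → Dual d := fun j => (((t j)⁻¹ : ℝ) : ℂ) • ψ j with hgdef
    have hgS : ∀ j, ‖g j‖ = 1 := by
      intro j
      show ‖(((t j)⁻¹ : ℝ) : ℂ) • ψ j‖ = 1
      have hns : ‖(((t j)⁻¹ : ℝ) : ℂ) • ψ j‖ = ‖(((t j)⁻¹ : ℝ) : ℂ)‖ * ‖ψ j‖ := norm_smul ((((t j)⁻¹ : ℝ) : ℂ)) (ψ j)
      rw [hns, Complex.norm_real, norm_inv, Real.norm_eq_abs, abs_of_pos (ht j)]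
      exact inv_mul_cancel₀ (ht j).ne'
    have hm_le : m ≤ prodSupNorm g := isMinOn_iff.mp hmin g hgS
    set P := prodSupNorm ψ with hP
    have hPnn : 0 ≤ P := prodSupNorm_nonneg ψ
    have hbound : prodSupNorm g ≤ (∏ j, t j)⁻¹ * P := by
      apply prodSupNorm_le
      · exact mul_nonneg (inv_nonneg.mpr htprod.le) hPnn
      intro x hx
      have hcalc : ∏ j, g j x = (((∏ j, (t j)⁻¹ : ℝ)) : ℂ) * ∏ j, ψ j x := by
        rw [hgdef]
        push_cast
        rw [← Finset.prod_mul_distrib]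
        apply Finset.prod_congr rfl
        intro j _
        simp
      rw [hcalc, norm_mul, Complex.norm_real, Real.norm_eq_abs,
        abs_of_pos (Finset.prod_pos (fun j _ => inv_pos.mpr (ht j))),
        Finset.prod_inv_distrib]
      exact mul_le_mul_of_nonneg_left (le_prodSupNorm ψ hx) (inv_nonneg.mpr htprod.le)
    have h1 : m * ∏ j, t j ≤ P := by
      calc m * ∏ j, t j ≤ ((∏ j, t j)⁻¹ * P) * ∏ j, t j :=
            mul_le_mul_of_nonneg_right (hm_le.trans hbound) htprod.le
        _ = P := by field_simp
    calc ∏ j, ‖ψ j‖ = m⁻¹ * (m * ∏ j, t j) := by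
          rw [htdef]
          field_simp
      _ ≤ m⁻¹ * P := mul_le_mul_of_nonneg_left h1 (inv_nonneg.mpr hmpos.le)
  · push_neg at hψ
    obtain ⟨j, hj⟩ := hψ
    have : ∏ j, ‖ψ j‖ = 0 := Finset.prod_eq_zero (mem_univ j) (by rw [hj, norm_zero])
    rw [this]
    exact mul_nonneg (inv_nonneg.mpr hmpos.le) (prodSupNorm_nonneg ψ)


end PolarAux

/-- The n-th linear polarization constant of ℓ_∞^d(ℂ) satisfies
c_n(ℓ_∞^d(ℂ)) ≥ (1/2)·√(d^n/(24n)^d). -/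
theorem polarizationConstant_linf_lower_bound (n d : ℕ) (hn : 1 ≤ n) (hd : 1 ≤ d) :
    (1 / 2) * Real.sqrt ((d : ℝ) ^ n / (24 * n : ℝ) ^ d)
      ≤ polarizationConstant ℂ (Fin d → ℂ) n := by
  rw [polarizationConstant]
  obtain ⟨c₀, hc₀0, hc₀⟩ := PolarAux.exists_const hn hd
  refine le_csInf ⟨c₀, ?_⟩ ?_
  · exact ⟨hc₀0, hc₀⟩
  rintro c ⟨hc0, hcineq⟩
  obtain ⟨ε, hε⟩ := PolarAux.exists_good_eps hn hd
  set ψ := PolarAux.psi ε with hψdef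
  set A := (d : ℝ) ^ n with hA'
  set B := (24 * n : ℝ) ^ d with hB'
  set C := ((n : ℝ) + 1) ^ d with hC'
  set T := Real.sqrt (C * A) with hT'
  have hdpos : (0:ℝ) < d := by exact_mod_cast hd
  have hnpos : (1:ℝ) ≤ n := by exact_mod_cast hn
  have hA : 0 < A := by rw [hA']; positivity
  have hB : 0 < B := by rw [hB']; positivity
  have hC : 0 < C := by rw [hC']; positivity
  have hT : 0 < T := by rw [hT']; exact Real.sqrt_pos.mpr (by positivity)
  have hS : prodSupNorm ψ ≤ T := by
    apply PolarAux.prodSupNorm_le ψ hT.le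
    intro x hx
    exact PolarAux.norm_prod_psi_le ε hε x hx
  have hlow : A ≤ ∏ j, ‖ψ j‖ := by
    rw [hA']
    calc (d:ℝ)^n = ∏ _j : Fin n, (d:ℝ) := by
          rw [Finset.prod_const, card_univ, Fintype.card_fin]
      _ ≤ ∏ j, ‖ψ j‖ :=
          Finset.prod_le_prod (fun _ _ => Nat.cast_nonneg d)
            (fun j _ => PolarAux.norm_psi_ge hd ε j)
  have key : A ≤ c * T :=
    (hlow.trans (hcineq ψ)).trans (mul_le_mul_of_nonneg_left hS hc0)
  have hc' : A / T ≤ c := (div_le_iff₀ hT).mpr key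
  refine le_trans ?_ hc'
  -- now pure arithmetic: (1/2) * √(A/B) ≤ A / T
  rw [le_div_iff₀ hT]
  have hCB : C ≤ B := by
    rw [hC', hB']
    exact pow_le_pow_left₀ (by positivity) (by linarith) d
  have hsqrtCB : Real.sqrt (C / B) ≤ 1 := by
    rw [show (1:ℝ) = Real.sqrt 1 from Real.sqrt_one.symm]
    exact Real.sqrt_le_sqrt ((div_le_one hB).mpr hCB)
  have expand : Real.sqrt (A / B) * T = A * Real.sqrt (C / B) := by
    rw [hT', ← Real.sqrt_mul (div_nonneg hA.le hB.le)]
    have h2 : A * Real.sqrt (C / B) = Real.sqrt (A ^ 2 * (C / B)) := by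
      rw [Real.sqrt_mul (by positivity), Real.sqrt_sq hA.le]
    rw [h2]
    congr 1
    field_simp
  rw [mul_assoc, expand]
  have hfin : A * Real.sqrt (C / B) ≤ A := by
    calc A * Real.sqrt (C / B) ≤ A * 1 := mul_le_mul_of_nonneg_left hsqrtCB hA.le
      _ = A := mul_one A
  have hnn : 0 ≤ A * Real.sqrt (C / B) := mul_nonneg hA.le (Real.sqrt_nonneg _)
  linarith
end

section
/- Let 1 ≤ p < ∞ and d ≥ 1. Then exp(∫_{S^{d−1}} log(1/‖z‖_p) dS(z)) ≤ (Vol(B_{ℓ_p^d}) / Vol(B_{ℓ_2^d}))^{1/d}, where dS is the normalized surface measure on the Euclidean unit sphere in ℝ^d. -/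
open MeasureTheory

/-- The normalized (uniform probability) surface measure on the unit sphere of
`EuclideanSpace ℝ (Fin d)`. -/
noncomputable def unifSphere (d : ℕ) :
    Measure (Metric.sphere (0 : EuclideanSpace ℝ (Fin d)) 1) :=
  ((volume : Measure (EuclideanSpace ℝ (Fin d))).toSphere Set.univ)⁻¹ •
    (volume : Measure (EuclideanSpace ℝ (Fin d))).toSphere

open Metric Set Real
open scoped ENNReal NNReal

section Aux

variable {d : ℕ}

/-- The `ℓ^p` norm on `EuclideanSpace ℝ (Fin d)`. -/
noncomputable def Np (p : ℝ) {d : ℕ} (x : EuclideanSpace ℝ (Fin d)) : ℝ :=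
  (∑ i, |x i| ^ p) ^ (1 / p)

lemma Np_nonneg (p : ℝ) (x : EuclideanSpace ℝ (Fin d)) : 0 ≤ Np p x :=
  Real.rpow_nonneg (Finset.sum_nonneg fun _ _ => Real.rpow_nonneg (abs_nonneg _) _) _

lemma sum_abs_rpow_pos {p : ℝ} (hp : 0 < p) {x : EuclideanSpace ℝ (Fin d)} (hx : x ≠ 0) :
    0 < ∑ i, |x i| ^ p := by
  obtain ⟨i, hi⟩ : ∃ i, x i ≠ 0 := by
    by_contra h
    push_neg at h
    exact hx (PiLp.ext h)
  refine Finset.sum_pos' (fun j _ => Real.rpow_nonneg (abs_nonneg _) _)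
    ⟨i, Finset.mem_univ i, Real.rpow_pos_of_pos (abs_pos.2 hi) _⟩

lemma Np_pos {p : ℝ} (hp : 0 < p) {x : EuclideanSpace ℝ (Fin d)} (hx : x ≠ 0) :
    0 < Np p x :=
  Real.rpow_pos_of_pos (sum_abs_rpow_pos hp hx) _

lemma Np_smul {p : ℝ} (hp : 0 < p) {c : ℝ} (hc : 0 ≤ c) (x : EuclideanSpace ℝ (Fin d)) :
    Np p (c • x) = c * Np p x := by
  have hsum : ∀ i, |(c • x) i| ^ p = c ^ p * |x i| ^ p := fun i => by
    have : (c • x) i = c * x i := rfl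
    rw [this, abs_mul, abs_of_nonneg hc, Real.mul_rpow hc (abs_nonneg _)]
  unfold Np
  rw [Finset.sum_congr rfl fun i _ => hsum i, ← Finset.mul_sum,
    Real.mul_rpow (Real.rpow_nonneg hc _)
      (Finset.sum_nonneg fun _ _ => Real.rpow_nonneg (abs_nonneg _) _),
    ← Real.rpow_mul hc, mul_one_div_cancel hp.ne', Real.rpow_one]

lemma continuous_Np {p : ℝ} (hp : 0 < p) : Continuous (Np p (d := d)) := by
  unfold Np
  refine (Real.continuous_rpow_const (by positivity)).comp ?_
  refine continuous_finset_sum _ fun i _ => ?_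
  exact (Real.continuous_rpow_const hp.le).comp ((EuclideanSpace.proj (𝕜 := ℝ) i).continuous.abs)

lemma volumeIoiPow_singleton (n : ℕ) (x : Ioi (0 : ℝ)) :
    Measure.volumeIoiPow n {x} = 0 := by
  have h0 : Measure.comap Subtype.val (volume : Measure ℝ) {x} = 0 := by
    rw [comap_subtype_coe_apply measurableSet_Ioi]
    simp
  rw [Measure.volumeIoiPow, withDensity_apply _ (measurableSet_singleton x),
    Measure.restrict_eq_zero.2 h0]
  simp

lemma volumeIoiPow_apply_Iic (n : ℕ) (x : Ioi (0 : ℝ)) :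
    Measure.volumeIoiPow n (Iic x) = ENNReal.ofReal (x.1 ^ (n + 1) / (n + 1)) := by
  rw [← measure_diff_null (volumeIoiPow_singleton n x), Set.Iic_diff_right,
    Measure.volumeIoiPow_apply_Iio]

end Aux

section Main

variable (p : ℝ) (d : ℕ)

local notation "E" => EuclideanSpace ℝ (Fin d)

lemma volume_Np_le_one (hp : 1 ≤ p) (hd : 1 ≤ d) :
    volume {x : E | Np p x ≤ 1}
      = ∫⁻ z : sphere (0 : E) 1,
          ENNReal.ofReal ((Np p (z : E))⁻¹ ^ d / d) ∂((volume : Measure E).toSphere) := by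
  have hp0 : (0 : ℝ) < p := lt_of_lt_of_le one_pos hp
  have hdim : Module.finrank ℝ E = d := finrank_euclideanSpace_fin
  have hd0 : d ≠ 0 := by omega
  haveI : Nonempty (Fin d) := ⟨⟨0, hd⟩⟩
  haveI : Nontrivial E := inferInstance
  have hmp := Measure.measurePreserving_homeomorphUnitSphereProd (volume : Measure E)
  set h := homeomorphUnitSphereProd E with hh
  -- the set in sphere × Ioi coordinates
  set A : Set (sphere (0 : E) 1 × Ioi (0 : ℝ)) :=
    {zr | zr.2.1 * Np p (zr.1 : E) ≤ 1} with hA_def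
  have hcont : Continuous fun zr : sphere (0 : E) 1 × Ioi (0 : ℝ) =>
      zr.2.1 * Np p (zr.1 : E) :=
    (continuous_subtype_val.comp continuous_snd).mul
      ((continuous_Np hp0).comp (continuous_subtype_val.comp continuous_fst))
  have hA : MeasurableSet A := (isClosed_le hcont continuous_const).measurableSet
  have hpre : h ⁻¹' A = (Subtype.val) ⁻¹' {x : E | Np p x ≤ 1} := by
    ext ⟨x, hx⟩
    have hx0 : x ≠ 0 := hx
    have hnx : ‖x‖ ≠ 0 := norm_ne_zero_iff.2 hx0
    simp only [mem_preimage, hA_def, mem_setOf_eq, hh, homeomorphUnitSphereProd_apply_snd_coe,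
      homeomorphUnitSphereProd_apply_fst_coe]
    rw [Np_smul hp0 (inv_nonneg.2 (norm_nonneg x)), ← mul_assoc, mul_inv_cancel₀ hnx, one_mul]
  calc
    volume {x : E | Np p x ≤ 1} = volume ({x : E | Np p x ≤ 1} \ {0}) :=
      (measure_diff_null (measure_singleton 0)).symm
    _ = Measure.comap Subtype.val (volume : Measure E)
          ((Subtype.val) ⁻¹' {x : E | Np p x ≤ 1}) := by
      rw [comap_subtype_coe_apply (measurableSet_singleton (0 : E)).compl,
        Subtype.image_preimage_coe, diff_eq, Set.inter_comm]
    _ = Measure.comap Subtype.val (volume : Measure E) (h ⁻¹' A) := by rw [hpre]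
    _ = ((volume : Measure E).toSphere.prod
          (Measure.volumeIoiPow (Module.finrank ℝ E - 1))) A := by
      rw [← hmp.map_eq, Measure.map_apply h.measurable hA]
    _ = ∫⁻ z : sphere (0 : E) 1,
          Measure.volumeIoiPow (Module.finrank ℝ E - 1) (Prod.mk z ⁻¹' A)
          ∂((volume : Measure E).toSphere) := Measure.prod_apply hA
    _ = _ := by
      refine lintegral_congr fun z => ?_
      have hz : (z : E) ≠ 0 := ne_of_mem_sphere z.2 one_ne_zero
      have hNz : 0 < Np p (z : E) := Np_pos hp0 hz
      have hIic : Prod.mk z ⁻¹' A = Iic (⟨(Np p (z : E))⁻¹, inv_pos.2 hNz⟩ : Ioi (0 : ℝ)) := by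
        ext r
        simp only [mem_preimage, hA_def, mem_setOf_eq, mem_Iic, ← Subtype.coe_le_coe]
        rw [← le_div_iff₀ hNz, one_div]
      have hcast : ((d - 1 : ℕ) : ℝ) + 1 = (d : ℝ) := by
        rw [Nat.cast_sub hd]; simp
      rw [hIic, volumeIoiPow_apply_Iic, hdim, Nat.sub_add_cancel hd, hcast, inv_pow]

lemma toSphere_univ_pos (hd : 1 ≤ d) :
    (volume : Measure E).toSphere univ ≠ 0 ∧ (volume : Measure E).toSphere univ ≠ ∞ := by
  have hdim : Module.finrank ℝ E = d := finrank_euclideanSpace_fin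
  rw [Measure.toSphere_apply_univ, hdim]
  refine ⟨?_, ENNReal.mul_ne_top (ENNReal.natCast_ne_top d) measure_ball_lt_top.ne⟩
  exact mul_ne_zero ((Nat.cast_ne_zero (R := ℝ≥0∞)).2 (by omega))
    (measure_ball_pos volume (0 : E) one_pos).ne'

end Main

/-- Jensen/polar-coordinates bound: for 1 ≤ p < ∞ and d ≥ 1,
exp(∫_{S^{d-1}} log(1/‖z‖_p) dS(z)) ≤ (Vol(B_{ℓ_p^d}) / Vol(B_{ℓ_2^d}))^{1/d}. -/
theorem exp_integral_log_le_volume_ratio (p : ℝ) (hp : 1 ≤ p) (d : ℕ) (hd : 1 ≤ d) :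
    Real.exp (∫ z : Metric.sphere (0 : EuclideanSpace ℝ (Fin d)) 1,
        Real.log (1 / (∑ i, |(z : EuclideanSpace ℝ (Fin d)) i| ^ p) ^ (1 / p))
          ∂(unifSphere d))
      ≤ ((volume {x : EuclideanSpace ℝ (Fin d) | (∑ i, |x i| ^ p) ^ (1 / p) ≤ 1}).toReal
          / (volume (Metric.closedBall (0 : EuclideanSpace ℝ (Fin d)) 1)).toReal)
        ^ ((1 : ℝ) / d) := by
  classical
  have hp0 : (0 : ℝ) < p := lt_of_lt_of_le one_pos hp
  have hd0 : (d : ℝ) ≠ 0 := Nat.cast_ne_zero.2 (by omega)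
  haveI : Nonempty (Fin d) := ⟨⟨0, hd⟩⟩
  haveI : Nontrivial (EuclideanSpace ℝ (Fin d)) := inferInstance
  set E' := EuclideanSpace ℝ (Fin d)
  set μ := unifSphere d with hμ
  obtain ⟨hc0, hctop⟩ := toSphere_univ_pos d hd
  haveI hprob : IsProbabilityMeasure μ := by
    constructor
    simp only [hμ, unifSphere, Measure.smul_apply, smul_eq_mul]
    exact ENNReal.inv_mul_cancel hc0 hctop
  have hNcont : Continuous fun z : sphere (0 : E') 1 => Np p (z : E') :=
    (continuous_Np hp0).comp continuous_subtype_val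
  have hNpos : ∀ z : sphere (0 : E') 1, 0 < Np p (z : E') := fun z =>
    Np_pos hp0 (ne_of_mem_sphere z.2 one_ne_zero)
  have hint : ∀ g : sphere (0 : E') 1 → ℝ, Continuous g → Integrable g μ := by
    intro g hg
    have := hg.continuousOn.integrableOn_compact (μ := μ) isCompact_univ
    rwa [integrableOn_univ] at this
  set f : sphere (0 : E') 1 → ℝ := fun z => Real.log (1 / Np p (z : E')) with hf
  have hfcont : Continuous f :=
    (continuous_const.div hNcont fun z => (hNpos z).ne').log
      fun z => (one_div_pos.2 (hNpos z)).ne' 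
  set I := ∫ z, f z ∂μ with hI
  have hgcont : Continuous fun z : sphere (0 : E') 1 => (Np p (z : E'))⁻¹ ^ d :=
    (hNcont.inv₀ fun z => (hNpos z).ne').pow d
  have hgnn : ∀ z : sphere (0 : E') 1, 0 ≤ (Np p (z : E'))⁻¹ ^ d := fun z =>
    pow_nonneg (inv_nonneg.2 (Np_nonneg _ _)) d
  set J := ∫ z : sphere (0 : E') 1, (Np p (z : E'))⁻¹ ^ d ∂μ with hJ
  have hJnn : 0 ≤ J := integral_nonneg hgnn
  -- Jensen's inequality
  have hexpF : ∀ z : sphere (0 : E') 1, Real.exp ((d : ℝ) * f z) = (Np p (z : E'))⁻¹ ^ d := by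
    intro z
    rw [Real.exp_nat_mul, show f z = Real.log (1 / Np p (z : E')) from rfl,
      Real.exp_log (one_div_pos.2 (hNpos z)), one_div]
  have hjensen : Real.exp I ^ d ≤ J := by
    have h1 := convexOn_exp.map_integral_le (f := fun z => (d : ℝ) * f z) (μ := μ)
      Real.continuous_exp.continuousOn isClosed_univ
      (Filter.Eventually.of_forall fun z => Set.mem_univ _)
      (hint _ (continuous_const.mul hfcont))
      (hint _ (Real.continuous_exp.comp (continuous_const.mul hfcont)))
    rw [integral_const_mul, ← hI] at h1
    rw [← Real.exp_nat_mul]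
    refine h1.trans ?_
    rw [hJ]
    refine le_of_eq (integral_congr_ae (Filter.Eventually.of_forall fun z => hexpF z))
  -- volume computation
  have hdim : Module.finrank ℝ E' = d := finrank_euclideanSpace_fin
  have htos : (volume : Measure E').toSphere = ((volume : Measure E').toSphere Set.univ) • μ := by
    rw [hμ, unifSphere, smul_smul, ENNReal.mul_inv_cancel hc0 hctop, one_smul]
  have hgd_int : Integrable (fun z : sphere (0 : E') 1 => (Np p (z : E'))⁻¹ ^ d / d) μ :=
    hint _ (hgcont.div_const _)
  have hvol : volume {x : E' | Np p x ≤ 1}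
      = ((volume : Measure E').toSphere Set.univ) * ENNReal.ofReal (J / d) := by
    rw [volume_Np_le_one p d hp hd]
    conv_lhs => rw [htos]
    rw [lintegral_smul_measure]
    congr 1
    rw [← ofReal_integral_eq_lintegral_ofReal hgd_int
      (Filter.Eventually.of_forall fun z => div_nonneg (hgnn z) (Nat.cast_nonneg d)),
      integral_div, ← hJ]
  have hball : (0 : ℝ) < (volume (Metric.ball (0 : E') 1)).toReal :=
    ENNReal.toReal_pos (measure_ball_pos volume (0 : E') one_pos).ne' measure_ball_lt_top.ne
  have hratio : (volume {x : E' | Np p x ≤ 1}).toReal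
      / (volume (Metric.closedBall (0 : E') 1)).toReal = J := by
    rw [Measure.addHaar_closedBall_eq_addHaar_ball, hvol, Measure.toSphere_apply_univ, hdim,
      ENNReal.toReal_mul, ENNReal.toReal_mul, ENNReal.toReal_ofReal (by positivity),
      ENNReal.toReal_natCast]
    field_simp
  -- conclude
  have hgoal : Real.exp I ≤ ((volume {x : E' | Np p x ≤ 1}).toReal
      / (volume (Metric.closedBall (0 : E') 1)).toReal) ^ ((1 : ℝ) / d) := by
    rw [hratio]
    calc Real.exp I = ((Real.exp I ^ d : ℝ)) ^ ((1 : ℝ) / d) := by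
          rw [← Real.rpow_natCast (Real.exp I) d, ← Real.rpow_mul (Real.exp_nonneg I),
            mul_one_div_cancel hd0, Real.rpow_one]
      _ ≤ J ^ ((1 : ℝ) / d) :=
          Real.rpow_le_rpow (pow_nonneg (Real.exp_nonneg I) d) hjensen (by positivity)
  exact hgoal
end
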